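/- arXiv:1809.06816 — 8 statements merged into one kernel-verified Lean document; each statement's English description precedes it below -/
import Mathlib

section
/- The double arrow space 𝔸 is separable: the set of points ⟨q,0⟩ with q a rational in (0,1] is countable and dense in 𝔸. -/
open Set Topology

def DoubleArrow : Type :=
  {p : ℝ ×ₗ Bool // ((ofLex p).2 = false ∧ (ofLex p).1 ∈ Set.Ioc (0:ℝ) 1) ∨
    ((ofLex p).2 = true ∧ (ofLex p).1 ∈ Set.Ico (0:ℝ) 1)}

noncomputable instance : LinearOrder DoubleArrow := Subtype.instLinearOrder _
noncomputable instance : TopologicalSpace DoubleArrow := Preorder.topology DoubleArrow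
instance : OrderTopology DoubleArrow := ⟨rfl⟩

/-- The points ⟨q,0⟩ with q rational in (0,1]. -/
def ratLowerPoints : Set DoubleArrow :=
  {a | (ofLex a.1).2 = false ∧ ∃ q : ℚ, 0 < q ∧ q ≤ 1 ∧ (ofLex a.1).1 = (q : ℝ)}

lemma DA_lt_iff (a b : DoubleArrow) :
    a < b ↔ (ofLex a.1).1 < (ofLex b.1).1 ∨
      ((ofLex a.1).1 = (ofLex b.1).1 ∧ (ofLex a.1).2 < (ofLex b.1).2) :=
  Subtype.coe_lt_coe.symm.trans Prod.Lex.lt_iff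

/-- the point (q,0) -/
noncomputable def DA_pt (q : ℚ) (h0 : 0 < q) (h1 : q ≤ 1) : DoubleArrow :=
  ⟨toLex ((q : ℝ), false), Or.inl ⟨rfl, ⟨show (0:ℝ) < (q:ℝ) by exact_mod_cast h0, show (q:ℝ) ≤ 1 by exact_mod_cast h1⟩⟩⟩

lemma DA_pt_mem (q : ℚ) (h0 : 0 < q) (h1 : q ≤ 1) :
    DA_pt q h0 h1 ∈ ratLowerPoints :=
  ⟨rfl, q, h0, h1, rfl⟩

theorem doubleArrow_separable :
    ratLowerPoints.Countable ∧ Dense ratLowerPoints := by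
  constructor
  · have hmt : MapsTo (fun a : DoubleArrow => (ofLex a.1).1) ratLowerPoints
        (Set.range ((↑) : ℚ → ℝ)) := by
      rintro a ⟨-, q, -, -, hq⟩
      exact ⟨q, hq.symm⟩
    refine hmt.countable_of_injOn ?_ (countable_range _)
    rintro a ⟨ha, -⟩ b ⟨hb, -⟩ h
    refine Subtype.ext (ofLex.injective (Prod.ext h ?_))
    rw [ha, hb]
  · intro x
    rw [mem_closure_iff_nhds]
    intro t ht
    rcases x.2 with ⟨hf, hx0, hx1⟩ | ⟨htr, hx0, hx1⟩
    · -- x = (r, false), 0 < r ≤ 1 : approach from the left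
      have hlt : (⟨toLex ((0:ℝ), true), Or.inr ⟨rfl, le_refl 0, zero_lt_one⟩⟩ : DoubleArrow) < x := by
        exact (DA_lt_iff _ _).mpr (Or.inl hx0)
      obtain ⟨l, hl, hsub⟩ := exists_Ioc_subset_of_mem_nhds ht ⟨_, hlt⟩
      have hl1 : (ofLex l.1).1 < (ofLex x.1).1 := by
        rcases (DA_lt_iff l x).mp hl with h | ⟨-, h2⟩
        · exact h
        · rw [hf] at h2; exact absurd h2 (by simp)
      obtain ⟨q, hq1, hq2⟩ := exists_rat_btwn (max_lt hl1 hx0 : max (ofLex l.1).1 0 < (ofLex x.1).1)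
      have hq0 : 0 < q := by exact_mod_cast lt_of_le_of_lt (le_max_right _ _) hq1
      have hqle : q ≤ 1 := by exact_mod_cast le_of_lt (lt_of_lt_of_le hq2 hx1)
      refine ⟨DA_pt q hq0 hqle, hsub ⟨?_, ?_⟩, DA_pt_mem q hq0 hqle⟩
      · rw [DA_lt_iff]; exact Or.inl (lt_of_le_of_lt (le_max_left _ _) hq1)
      · exact le_of_lt ((DA_lt_iff _ _).mpr (Or.inl hq2))
    · -- x = (r, true), 0 ≤ r < 1 : approach from the right
      have hlt : x < (⟨toLex ((1:ℝ), false), Or.inl ⟨rfl, zero_lt_one, le_refl 1⟩⟩ : DoubleArrow) := by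
        exact (DA_lt_iff _ _).mpr (Or.inl hx1)
      obtain ⟨u, hu, hsub⟩ := exists_Ico_subset_of_mem_nhds ht ⟨_, hlt⟩
      have hu1 : (ofLex x.1).1 < (ofLex u.1).1 := by
        rcases (DA_lt_iff x u).mp hu with h | ⟨-, h2⟩
        · exact h
        · rw [htr] at h2; exact absurd h2 (by simp)
      obtain ⟨q, hq1, hq2⟩ := exists_rat_btwn (lt_min hu1 hx1 : (ofLex x.1).1 < min (ofLex u.1).1 1)
      have hq0 : 0 < q := by exact_mod_cast lt_of_le_of_lt hx0 hq1
      have hqle : q ≤ 1 := by exact_mod_cast le_of_lt (lt_of_lt_of_le hq2 (min_le_right _ _))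
      refine ⟨DA_pt q hq0 hqle, hsub ⟨?_, ?_⟩, DA_pt_mem q hq0 hqle⟩
      · exact le_of_lt ((DA_lt_iff _ _).mpr (Or.inl hq1))
      · rw [DA_lt_iff]; exact Or.inl (lt_of_lt_of_le hq2 (min_le_left _ _))
end

section
/- Every compact metrizable subspace of the double arrow space 𝔸 is countable. -/
open Set Topology

lemma DoubleArrow.le_iff (p q : DoubleArrow) :
    p ≤ q ↔ (ofLex p.1).1 < (ofLex q.1).1 ∨
      ((ofLex p.1).1 = (ofLex q.1).1 ∧ (ofLex p.1).2 ≤ (ofLex q.1).2) := by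
  show p.1 ≤ q.1 ↔ _
  rw [show p.1 = toLex (ofLex p.1) from rfl, show q.1 = toLex (ofLex q.1) from rfl,
    Prod.Lex.le_iff]

lemma DoubleArrow.lt_iff (p q : DoubleArrow) :
    p < q ↔ (ofLex p.1).1 < (ofLex q.1).1 ∨
      ((ofLex p.1).1 = (ofLex q.1).1 ∧ (ofLex p.1).2 < (ofLex q.1).2) := by
  show p.1 < q.1 ↔ _
  rw [show p.1 = toLex (ofLex p.1) from rfl, show q.1 = toLex (ofLex q.1) from rfl,
    Prod.Lex.lt_iff]

lemma DoubleArrow.isOpen_Ici_of_true (p : DoubleArrow) (h : (ofLex p.1).2 = true) :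
    IsOpen (Ici p) := by
  have hp : (ofLex p.1).1 ∈ Set.Ico (0:ℝ) 1 := by
    rcases p.2 with ⟨h2, _⟩ | ⟨_, h2⟩
    · rw [h] at h2; exact absurd h2 (by simp)
    · exact h2
  rcases eq_or_lt_of_le hp.1 with h0 | h0
  · have : Ici p = univ := by
      ext z
      simp only [mem_Ici, mem_univ, iff_true]
      rw [DoubleArrow.le_iff, ← h0, h]
      rcases z.2 with ⟨hz2, hz1⟩ | ⟨hz2, hz1⟩
      · exact Or.inl hz1.1
      · rcases eq_or_lt_of_le hz1.1 with h0' | h0'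
        · exact Or.inr ⟨h0', hz2.ge⟩
        · exact Or.inl h0'
    rw [this]; exact isOpen_univ
  · set q : DoubleArrow := ⟨toLex ((ofLex p.1).1, false), Or.inl ⟨rfl, h0, le_of_lt hp.2⟩⟩
      with hqdef
    have hq1 : (ofLex q.1).1 = (ofLex p.1).1 := rfl
    have hq2 : (ofLex q.1).2 = false := rfl
    have key : Ici p = Ioi q := by
      ext z
      simp only [mem_Ici, mem_Ioi]
      rw [DoubleArrow.le_iff, DoubleArrow.lt_iff, hq1, hq2, h]
      constructor
      · rintro (h1 | ⟨h1, h2⟩)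
        · exact Or.inl h1
        · have hz : (ofLex z.1).2 = true := le_antisymm (Bool.le_true _) h2
          exact Or.inr ⟨h1, by rw [hz]; exact Bool.false_lt_true⟩
      · rintro (h1 | ⟨h1, h2⟩)
        · exact Or.inl h1
        · refine Or.inr ⟨h1, ?_⟩
          cases hzz : (ofLex z.1).2
          · rw [hzz] at h2; exact absurd h2 (by simp)
          · exact le_rfl
    rw [key]; exact isOpen_Ioi

lemma DoubleArrow.isOpen_Iic_of_false (p : DoubleArrow) (h : (ofLex p.1).2 = false) :
    IsOpen (Iic p) := by
  have hp : (ofLex p.1).1 ∈ Set.Ioc (0:ℝ) 1 := by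
    rcases p.2 with ⟨_, h2⟩ | ⟨h2, _⟩
    · exact h2
    · rw [h] at h2; exact absurd h2 (by simp)
  rcases eq_or_lt_of_le hp.2 with h0 | h0
  · have : Iic p = univ := by
      ext z
      simp only [mem_Iic, mem_univ, iff_true]
      rw [DoubleArrow.le_iff, h0, h]
      rcases z.2 with ⟨hz2, hz1⟩ | ⟨hz2, hz1⟩
      · rcases eq_or_lt_of_le hz1.2 with h1' | h1'
        · exact Or.inr ⟨h1', hz2.le⟩
        · exact Or.inl h1'
      · exact Or.inl hz1.2
    rw [this]; exact isOpen_univ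
  · set q : DoubleArrow := ⟨toLex ((ofLex p.1).1, true), Or.inr ⟨rfl, le_of_lt hp.1, h0⟩⟩
      with hqdef
    have hq1 : (ofLex q.1).1 = (ofLex p.1).1 := rfl
    have hq2 : (ofLex q.1).2 = true := rfl
    have key : Iic p = Iio q := by
      ext z
      simp only [mem_Iic, mem_Iio]
      rw [DoubleArrow.le_iff, DoubleArrow.lt_iff, hq1, hq2, h]
      constructor
      · rintro (h1 | ⟨h1, h2⟩)
        · exact Or.inl h1
        · have hz : (ofLex z.1).2 = false := le_antisymm h2 (Bool.false_le _)
          exact Or.inr ⟨h1, by rw [hz]; exact Bool.false_lt_true⟩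
      · rintro (h1 | ⟨h1, h2⟩)
        · exact Or.inl h1
        · refine Or.inr ⟨h1, ?_⟩
          cases hzz : (ofLex z.1).2
          · exact le_rfl
          · rw [hzz] at h2; exact absurd h2 (by simp)
    rw [key]; exact isOpen_Iio

theorem compact_metrizable_subset_doubleArrow_countable :
    ∀ S : Set DoubleArrow, IsCompact S →
      TopologicalSpace.MetrizableSpace S → S.Countable := by
  intro S hS hm
  haveI : CompactSpace S := isCompact_iff_compactSpace.mp hS
  letI : MetricSpace S := TopologicalSpace.metrizableSpaceMetric S
  haveI : SecondCountableTopology S := inferInstance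
  rw [← Set.countable_coe_iff]
  obtain ⟨b, hbc, -, hbb⟩ := TopologicalSpace.exists_countable_basis ↥S
  set U : ↥S → Set ↥S := fun p =>
    Subtype.val ⁻¹' (if (ofLex p.1.1).2 = true then Ici p.1 else Iic p.1) with hU
  have hUopen : ∀ p, IsOpen (U p) := by
    intro p
    apply (continuous_subtype_val).isOpen_preimage
    split
    · exact DoubleArrow.isOpen_Ici_of_true p.1 (by assumption)
    · exact DoubleArrow.isOpen_Iic_of_false p.1 (Bool.eq_false_iff.mpr (by assumption))
  have hUmem : ∀ p, p ∈ U p := by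
    intro p
    simp only [hU, mem_preimage]
    split <;> simp
  have hchoice : ∀ p : ↥S, ∃ t ∈ b, p ∈ t ∧ t ⊆ U p := fun p =>
    hbb.exists_subset_of_mem_open (hUmem p) (hUopen p)
  choose t ht hpt hsub using hchoice
  haveI : Countable ↥b := hbc.to_subtype
  have hinj : Function.Injective
      (fun p : ↥S => ((⟨t p, ht p⟩ : ↥b), (ofLex p.1.1).2)) := by
    intro p q hpq
    simp only [Prod.mk.injEq, Subtype.mk.injEq] at hpq
    obtain ⟨h1, h2⟩ := hpq
    have hpUq : p ∈ U q := hsub q (h1 ▸ hpt p)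
    have hqUp : q ∈ U p := hsub p (h1.symm ▸ hpt q)
    simp only [hU, mem_preimage] at hpUq hqUp
    refine Subtype.ext (le_antisymm ?_ ?_) <;> cases hb : (ofLex p.1.1).2
    · rw [hb] at h2; rw [← h2, if_neg (by simp)] at hpUq; exact hpUq
    · rw [hb] at h2; rw [← h2, if_pos rfl] at hpUq; rw [hb, if_pos rfl] at hqUp; exact hqUp
    · rw [hb, if_neg (by simp)] at hqUp; exact hqUp
    · rw [hb] at h2; rw [← h2, if_pos rfl] at hpUq; exact hpUq
  exact hinj.countable
end

section
/- The double arrow space 𝔸 contains no subspace homeomorphic to the Cantor set 2^ω. -/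
open Set Topology

/-- Every point of the double arrow has an open `Ici` or an open `Iic`. -/
lemma DoubleArrow.isOpen_Ici_or_Iic (p : DoubleArrow) :
    IsOpen (Ici p) ∨ IsOpen (Iic p) := by
  obtain ⟨pv, hp⟩ := p
  rcases hp with ⟨hb, hx⟩ | ⟨hb, hx⟩
  · -- second coordinate false, first in (0,1]
    right
    rcases eq_or_lt_of_le hx.2 with h1 | h1
    · -- p = (1, false) is the top element
      have : Iic (⟨pv, Or.inl ⟨hb, hx⟩⟩ : DoubleArrow) = univ := by
        apply eq_univ_iff_forall.mpr
        rintro ⟨qv, hq⟩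
        show qv ≤ pv
        have hle : toLex (ofLex qv) ≤ toLex (ofLex pv) := by
          rw [Prod.Lex.le_iff]
          rcases hq with ⟨hqb, hqx⟩ | ⟨hqb, hqx⟩
          · rcases eq_or_lt_of_le hqx.2 with h | h
            · exact Or.inr ⟨h.trans h1.symm, by simp only [ofLex_toLex]; rw [hqb, hb]⟩
            · exact Or.inl (h.trans_eq h1.symm)
          · exact Or.inl (hqx.2.trans_eq h1.symm)
        exact hle
      exact (congrArg (IsOpen (X := DoubleArrow)) this).mpr isOpen_univ
    · -- p = (x, false) with x < 1, then Iic p = Iio (x, true)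
      set x := (ofLex pv).1 with hxdef
      have hmem : ((ofLex (toLex (x, true))).2 = false ∧
            (ofLex (toLex (x, true))).1 ∈ Set.Ioc (0:ℝ) 1) ∨
          ((ofLex (toLex (x, true))).2 = true ∧
            (ofLex (toLex (x, true))).1 ∈ Set.Ico (0:ℝ) 1) :=
        Or.inr ⟨rfl, ⟨le_of_lt hx.1, h1⟩⟩
      have : Iic (⟨pv, Or.inl ⟨hb, hx⟩⟩ : DoubleArrow)
          = Iio (⟨toLex (x, true), hmem⟩ : DoubleArrow) := by
        ext ⟨qv, hq⟩
        show qv ≤ pv ↔ qv < toLex (x, true)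
        constructor
        · intro hle
          apply lt_of_le_of_lt hle
          show toLex (ofLex pv) < toLex (x, true)
          rw [Prod.Lex.lt_iff]
          exact Or.inr ⟨rfl, by simp only [ofLex_toLex]; rw [hb]; exact Bool.false_lt_true⟩
        · intro hlt
          have hlt' : toLex (ofLex qv) < toLex (x, true) := hlt
          rw [Prod.Lex.lt_iff] at hlt'
          show toLex (ofLex qv) ≤ toLex (ofLex pv)
          rw [Prod.Lex.le_iff]
          rcases hlt' with h | ⟨h, h2⟩
          · exact Or.inl h
          · refine Or.inr ⟨h, ?_⟩
            have hqf : (ofLex qv).2 = false := by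
              simpa [Bool.lt_iff] using h2
            simp only [ofLex_toLex]; rw [hb, hqf]
      exact (congrArg (IsOpen (X := DoubleArrow)) this).mpr isOpen_Iio
  · -- second coordinate true, first in [0,1)
    left
    rcases eq_or_lt_of_le hx.1 with h0 | h0
    · -- p = (0, true) is the bottom element
      have : Ici (⟨pv, Or.inr ⟨hb, hx⟩⟩ : DoubleArrow) = univ := by
        apply eq_univ_iff_forall.mpr
        rintro ⟨qv, hq⟩
        show pv ≤ qv
        have hle : toLex (ofLex pv) ≤ toLex (ofLex qv) := by
          rw [Prod.Lex.le_iff]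
          rcases hq with ⟨hqb, hqx⟩ | ⟨hqb, hqx⟩
          · exact Or.inl (by simp only [ofLex_toLex]; rw [← h0]; exact hqx.1)
          · rcases eq_or_lt_of_le hqx.1 with h | h
            · exact Or.inr ⟨h0.symm.trans h, by simp only [ofLex_toLex]; rw [hqb, hb]⟩
            · exact Or.inl (by simp only [ofLex_toLex]; rw [← h0]; exact h)
        exact hle
      exact (congrArg (IsOpen (X := DoubleArrow)) this).mpr isOpen_univ
    · -- p = (x, true) with 0 < x, then Ici p = Ioi (x, false)
      set x := (ofLex pv).1 with hxdef
      have hmem : ((ofLex (toLex (x, false))).2 = false ∧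
            (ofLex (toLex (x, false))).1 ∈ Set.Ioc (0:ℝ) 1) ∨
          ((ofLex (toLex (x, false))).2 = true ∧
            (ofLex (toLex (x, false))).1 ∈ Set.Ico (0:ℝ) 1) :=
        Or.inl ⟨rfl, ⟨h0, le_of_lt hx.2⟩⟩
      have : Ici (⟨pv, Or.inr ⟨hb, hx⟩⟩ : DoubleArrow)
          = Ioi (⟨toLex (x, false), hmem⟩ : DoubleArrow) := by
        ext ⟨qv, hq⟩
        show pv ≤ qv ↔ toLex (x, false) < qv
        constructor
        · intro hle
          refine lt_of_lt_of_le ?_ hle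
          show toLex (x, false) < toLex (ofLex pv)
          rw [Prod.Lex.lt_iff]
          exact Or.inr ⟨rfl, by simp only [ofLex_toLex]; rw [hb]; exact Bool.false_lt_true⟩
        · intro hlt
          have hlt' : toLex (x, false) < toLex (ofLex qv) := hlt
          rw [Prod.Lex.lt_iff] at hlt'
          show toLex (ofLex pv) ≤ toLex (ofLex qv)
          rw [Prod.Lex.le_iff]
          rcases hlt' with h | ⟨h, h2⟩
          · exact Or.inl h
          · refine Or.inr ⟨h, ?_⟩
            have hqt : (ofLex qv).2 = true := by
              simpa [Bool.lt_iff] using h2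
            simp only [ofLex_toLex]; rw [hb, hqt]
      exact (congrArg (IsOpen (X := DoubleArrow)) this).mpr isOpen_Ioi

/-- Any second-countable subspace of the double arrow is countable. -/
lemma DoubleArrow.countable_of_secondCountable (S : Set DoubleArrow)
    [SecondCountableTopology S] : Countable S := by
  classical
  set B := TopologicalSpace.countableBasis S with hB
  have hBasis := TopologicalSpace.isBasis_countableBasis S
  have hBcnt : B.Countable := TopologicalSpace.countable_countableBasis S
  have key : ∀ p : S, ∃ (t : Set S) (b : Bool), t ∈ B ∧ p ∈ t ∧
      (∀ q ∈ t, if b then (p : DoubleArrow) ≤ q else (q : DoubleArrow) ≤ p) := by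
    intro p
    rcases DoubleArrow.isOpen_Ici_or_Iic (p : DoubleArrow) with h | h
    · have hopen : IsOpen ((Subtype.val : S → DoubleArrow) ⁻¹' Ici (p : DoubleArrow)) :=
        h.preimage continuous_subtype_val
      obtain ⟨t, htB, hpt, hsub⟩ := hBasis.exists_subset_of_mem_open
        (show p ∈ _ from self_mem_Ici) hopen
      exact ⟨t, true, htB, hpt, fun q hq => by simpa using hsub hq⟩
    · have hopen : IsOpen ((Subtype.val : S → DoubleArrow) ⁻¹' Iic (p : DoubleArrow)) :=
        h.preimage continuous_subtype_val
      obtain ⟨t, htB, hpt, hsub⟩ := hBasis.exists_subset_of_mem_open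
        (show p ∈ _ from self_mem_Iic) hopen
      exact ⟨t, false, htB, hpt, fun q hq => by simpa using hsub hq⟩
  choose t b htB hpt hcomp using key
  have : Countable ↑B := hBcnt.to_subtype
  have hinj : Function.Injective (fun p : S => ((⟨t p, htB p⟩ : ↑B), b p)) := by
    intro p q hpq
    have ht : t p = t q := congrArg (fun z => (z.1 : Set S)) hpq
    have hb : b p = b q := congrArg Prod.snd hpq
    have hq_in_tp : q ∈ t p := ht ▸ hpt q
    have hp_in_tq : p ∈ t q := ht.symm ▸ hpt p
    have h1 := hcomp p q hq_in_tp
    have h2 := hcomp q p hp_in_tq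
    cases hbv : b p
    · rw [hbv] at h1; rw [← hb, hbv] at h2
      simp at h1 h2
      exact Subtype.ext (le_antisymm h2 h1)
    · rw [hbv] at h1; rw [← hb, hbv] at h2
      simp at h1 h2
      exact Subtype.ext (le_antisymm h1 h2)
  exact hinj.countable

lemma not_countable_cantor (h : Countable (ℕ → Bool)) : False := by
  classical
  obtain ⟨f, hf⟩ := countable_iff_exists_injective (ℕ → Bool) |>.mp h
  have : Function.Injective (fun s : Set ℕ => f (fun n => decide (n ∈ s))) := by
    intro s t hst
    have := hf hst
    ext n
    have := congrFun this n
    simpa using this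
  exact Function.cantor_injective _ this

theorem doubleArrow_no_cantor_subspace :
    ∀ S : Set DoubleArrow, ¬ Nonempty ((ℕ → Bool) ≃ₜ S) := by
  intro S ⟨h⟩
  have hsc : SecondCountableTopology S :=
    h.symm.secondCountableTopology
  have hcnt : Countable S := DoubleArrow.countable_of_secondCountable S
  exact not_countable_cantor (Countable.of_equiv S h.toEquiv.symm)
end

section
/- The countable power 𝔸^ω of the double arrow space is not countable dense homogeneous. -/
open Set Topology

namespace DA

def fstv (p : DoubleArrow) : ℝ := (ofLex p.1).1
def sndv (p : DoubleArrow) : Bool := (ofLex p.1).2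

def mkT (x : ℝ) (h1 : 0 ≤ x) (h2 : x < 1) : DoubleArrow :=
  ⟨toLex (x, true), Or.inr ⟨rfl, h1, h2⟩⟩
def mkF (x : ℝ) (h1 : 0 < x) (h2 : x ≤ 1) : DoubleArrow :=
  ⟨toLex (x, false), Or.inl ⟨rfl, h1, h2⟩⟩

@[simp] lemma fstv_mkT (x h1 h2) : fstv (mkT x h1 h2) = x := rfl
@[simp] lemma sndv_mkT (x h1 h2) : sndv (mkT x h1 h2) = true := rfl
@[simp] lemma fstv_mkF (x h1 h2) : fstv (mkF x h1 h2) = x := rfl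
@[simp] lemma sndv_mkF (x h1 h2) : sndv (mkF x h1 h2) = false := rfl

lemma ext_iff {p q : DoubleArrow} : p = q ↔ fstv p = fstv q ∧ sndv p = sndv q := by
  constructor
  · rintro rfl; exact ⟨rfl, rfl⟩
  · rintro ⟨h1, h2⟩
    apply Subtype.ext
    have : ofLex p.1 = ofLex q.1 := Prod.ext h1 h2
    exact congrArg toLex this

lemma lt_iff {p q : DoubleArrow} :
    p < q ↔ fstv p < fstv q ∨ (fstv p = fstv q ∧ sndv p = false ∧ sndv q = true) := by
  change p.1 < q.1 ↔ _
  have := Prod.Lex.lt_iff (x := p.1) (y := q.1)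
  rw [Bool.lt_iff] at this
  exact this

lemma le_iff {p q : DoubleArrow} :
    p ≤ q ↔ fstv p < fstv q ∨ (fstv p = fstv q ∧ (sndv p = false ∨ sndv q = true)) := by
  rw [le_iff_lt_or_eq, lt_iff, ext_iff]
  cases hp : sndv p <;> cases hq : sndv q <;> simp [hp, hq] <;> tauto

lemma cases' (p : DoubleArrow) :
    (sndv p = true ∧ 0 ≤ fstv p ∧ fstv p < 1) ∨ (sndv p = false ∧ 0 < fstv p ∧ fstv p ≤ 1) := by
  rcases p.2 with h | h
  · exact Or.inr ⟨h.1, h.2⟩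
  · exact Or.inl ⟨h.1, h.2⟩

lemma eq_mk (p : DoubleArrow) :
    (∃ y h1 h2, p = mkT y h1 h2) ∨ (∃ y h1 h2, p = mkF y h1 h2) := by
  rcases cases' p with ⟨h, h1, h2⟩ | ⟨h, h1, h2⟩
  · exact Or.inl ⟨fstv p, h1, h2, ext_iff.2 ⟨rfl, by simp [h]⟩⟩
  · exact Or.inr ⟨fstv p, h1, h2, ext_iff.2 ⟨rfl, by simp [h]⟩⟩

@[simp] lemma mkT_lt_mkT {x y h1 h2 h1' h2'} : mkT x h1 h2 < mkT y h1' h2' ↔ x < y := by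
  simp [lt_iff]
@[simp] lemma mkF_lt_mkF {x y h1 h2 h1' h2'} : mkF x h1 h2 < mkF y h1' h2' ↔ x < y := by
  simp [lt_iff]
@[simp] lemma mkF_lt_mkT {x y h1 h2 h1' h2'} : mkF x h1 h2 < mkT y h1' h2' ↔ x ≤ y := by
  simp [lt_iff, le_iff_lt_or_eq]
@[simp] lemma mkT_lt_mkF {x y h1 h2 h1' h2'} : mkT x h1 h2 < mkF y h1' h2' ↔ x < y := by
  simp [lt_iff]
@[simp] lemma mkT_le_mkT {x y h1 h2 h1' h2'} : mkT x h1 h2 ≤ mkT y h1' h2' ↔ x ≤ y := by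
  rw [le_iff]; simp; exact le_iff_lt_or_eq.symm
@[simp] lemma mkF_le_mkF {x y h1 h2 h1' h2'} : mkF x h1 h2 ≤ mkF y h1' h2' ↔ x ≤ y := by
  rw [le_iff]; simp; exact le_iff_lt_or_eq.symm
@[simp] lemma mkT_le_mkF {x y h1 h2 h1' h2'} : mkT x h1 h2 ≤ mkF y h1' h2' ↔ x < y := by
  rw [le_iff]; simp
@[simp] lemma mkF_le_mkT {x y h1 h2 h1' h2'} : mkF x h1 h2 ≤ mkT y h1' h2' ↔ x ≤ y := by
  rw [le_iff]; simp; exact le_iff_lt_or_eq.symm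

/-- The jump: `Ici (x,true) = Ioi (x,false)`. -/
lemma Ici_mkT {x h1 h2 h1' h2'} : Ici (mkT x h1 h2) = Ioi (mkF x h1' h2') := by
  ext p
  rcases eq_mk p with ⟨y, g1, g2, rfl⟩ | ⟨y, g1, g2, rfl⟩ <;> simp [mem_Ici, mem_Ioi]

lemma Iic_mkF {x h1 h2 h1' h2'} : Iic (mkF x h1 h2) = Iio (mkT x h1' h2') := by
  ext p
  rcases eq_mk p with ⟨y, g1, g2, rfl⟩ | ⟨y, g1, g2, rfl⟩ <;> simp [mem_Iic, mem_Iio]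

/-- Every neighborhood of a point contains a nonempty interval of "true" points. -/
lemma exists_interval {U : Set DoubleArrow} {p : DoubleArrow} (hU : U ∈ nhds p) :
    ∃ a b : ℝ, 0 ≤ a ∧ a < b ∧ b ≤ 1 ∧ ∀ w, a < w → w < b →
      ∀ (g1 : (0:ℝ) ≤ w) (g2 : w < 1), mkT w g1 g2 ∈ U := by
  rcases eq_mk p with ⟨x, g1, g2, rfl⟩ | ⟨x, g1, g2, rfl⟩
  · have htop : ∃ u, mkT x g1 g2 < u := ⟨mkF 1 one_pos le_rfl, by simp [g2]⟩
    obtain ⟨u, hu, hsub⟩ := exists_Ico_subset_of_mem_nhds hU htop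
    have hxu : x < fstv u := by
      rw [lt_iff] at hu
      rcases hu with h | ⟨_, h, _⟩
      · simpa using h
      · simp at h
    refine ⟨x, min (fstv u) 1, g1, lt_min hxu g2, min_le_right _ _, ?_⟩
    intro w hw1 hw2 w1 w2
    apply hsub
    constructor
    · simp [hw1.le]
    · rcases eq_mk u with ⟨y, k1, k2, rfl⟩ | ⟨y, k1, k2, rfl⟩ <;>
        · simp only [mkT_lt_mkT, mkT_lt_mkF, fstv_mkT, fstv_mkF] at *
          exact lt_of_lt_of_le hw2 (min_le_left _ _)
  · have hbot : ∃ l, l < mkF x g1 g2 :=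
      ⟨mkT (x/2) (by linarith) (by linarith), by simp; linarith⟩
    obtain ⟨l, hl, hsub⟩ := exists_Ioc_subset_of_mem_nhds hU hbot
    have hlx : fstv l < x := by
      rw [lt_iff] at hl
      rcases hl with h | ⟨_, _, h⟩
      · simpa using h
      · simp at h
    refine ⟨max (fstv l) 0, x, le_max_right _ _, max_lt hlx g1, g2, ?_⟩
    intro w hw1 hw2 w1 w2
    apply hsub
    constructor
    · rcases eq_mk l with ⟨y, k1, k2, rfl⟩ | ⟨y, k1, k2, rfl⟩ <;>
        · simp only [mkT_lt_mkT, mkF_lt_mkT, fstv_mkT, fstv_mkF] at *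
          first
            | exact lt_of_le_of_lt (le_max_left _ _) hw1
            | exact le_of_lt (lt_of_le_of_lt (le_max_left _ _) hw1)
    · simp [hw2]

/-- A continuous image of a second-countable space in the double arrow space is countable. -/
lemma countable_range_of_secondCountable {K : Type*} [TopologicalSpace K]
    [SecondCountableTopology K]
    (f : K → DoubleArrow) (hf : Continuous f) : (Set.range f).Countable := by
  obtain ⟨b, hbc, -, hb⟩ := TopologicalSpace.exists_countable_basis K
  set ST : Set DoubleArrow := {y ∈ Set.range f | sndv y = true ∧ 0 < fstv y} with hST
  set SF : Set DoubleArrow := {y ∈ Set.range f | sndv y = false ∧ fstv y < 1} with hSF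
  have hsplit : Set.range f ⊆ ST ∪ SF ∪
      {p : DoubleArrow | (sndv p = true ∧ fstv p = 0) ∨ (sndv p = false ∧ fstv p = 1)} := by
    intro y hy
    rcases cases' y with ⟨h, h1, h2⟩ | ⟨h, h1, h2⟩
    · rcases eq_or_lt_of_le h1 with h0 | h0
      · exact Or.inr (Or.inl ⟨h, h0.symm⟩)
      · exact Or.inl (Or.inl ⟨hy, h, h0⟩)
    · rcases eq_or_lt_of_le h2 with h0 | h0
      · exact Or.inr (Or.inr ⟨h, h0⟩)
      · exact Or.inl (Or.inr ⟨hy, h, h0⟩)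
  have hrest : {p : DoubleArrow | (sndv p = true ∧ fstv p = 0) ∨
      (sndv p = false ∧ fstv p = 1)}.Countable := by
    apply Set.Countable.mono _
      ((Set.countable_singleton (mkF 1 one_pos le_rfl)).insert (mkT 0 le_rfl one_pos))
    rintro p (⟨h1, h2⟩ | ⟨h1, h2⟩)
    · exact Or.inl (ext_iff.2 ⟨by simp [h2], by simp [h1]⟩)
    · exact Or.inr (ext_iff.2 ⟨by simp [h2], by simp [h1]⟩)
  have hup : ∀ y ∈ ST, ∃ B, B ∈ b ∧ (∃ k, f k = y ∧ k ∈ B) ∧ ∀ k' ∈ B, y ≤ f k' := by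
    rintro y ⟨⟨k, hk⟩, hy1, hy2⟩
    rcases eq_mk y with ⟨x, g1, g2, rfl⟩ | ⟨x, g1, g2, rfl⟩
    swap; · simp at hy1
    simp only [fstv_mkT] at hy2
    have hopen : IsOpen (f ⁻¹' (Ici (mkT x g1 g2))) := by
      rw [Ici_mkT (h1' := hy2) (h2' := g2.le)]
      exact (isOpen_Ioi).preimage hf
    obtain ⟨B, hBb, hkB, hBsub⟩ := hb.exists_subset_of_mem_open
      (show k ∈ f ⁻¹' (Ici (mkT x g1 g2)) by simp [hk]) hopen
    exact ⟨B, hBb, ⟨k, hk, hkB⟩, fun k' hk' => hBsub hk'⟩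
  have hdn : ∀ y ∈ SF, ∃ B, B ∈ b ∧ (∃ k, f k = y ∧ k ∈ B) ∧ ∀ k' ∈ B, f k' ≤ y := by
    rintro y ⟨⟨k, hk⟩, hy1, hy2⟩
    rcases eq_mk y with ⟨x, g1, g2, rfl⟩ | ⟨x, g1, g2, rfl⟩
    · simp at hy1
    simp only [fstv_mkF] at hy2
    have hopen : IsOpen (f ⁻¹' (Iic (mkF x g1 g2))) := by
      rw [Iic_mkF (h1' := g1.le) (h2' := hy2)]
      exact (isOpen_Iio).preimage hf
    obtain ⟨B, hBb, hkB, hBsub⟩ := hb.exists_subset_of_mem_open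
      (show k ∈ f ⁻¹' (Iic (mkF x g1 g2)) by simp [hk]) hopen
    exact ⟨B, hBb, ⟨k, hk, hkB⟩, fun k' hk' => hBsub hk'⟩
  choose! gT hgT1 hgT2 hgT3 using hup
  choose! gF hgF1 hgF2 hgF3 using hdn
  have hSTc : ST.Countable := by
    refine Set.MapsTo.countable_of_injOn (fun y hy => hgT1 y hy) ?_ hbc
    intro y1 h1 y2 h2 heq
    obtain ⟨k2, hk2, hk2m⟩ := hgT2 y2 h2
    obtain ⟨k1, hk1, hk1m⟩ := hgT2 y1 h1
    have l1 : y1 ≤ f k2 := hgT3 y1 h1 k2 (heq ▸ hk2m)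
    have l2 : y2 ≤ f k1 := hgT3 y2 h2 k1 (heq ▸ hk1m)
    rw [hk2] at l1; rw [hk1] at l2
    exact le_antisymm l1 l2
  have hSFc : SF.Countable := by
    refine Set.MapsTo.countable_of_injOn (fun y hy => hgF1 y hy) ?_ hbc
    intro y1 h1 y2 h2 heq
    obtain ⟨k2, hk2, hk2m⟩ := hgF2 y2 h2
    obtain ⟨k1, hk1, hk1m⟩ := hgF2 y1 h1
    have l1 : f k2 ≤ y1 := hgF3 y1 h1 k2 (heq ▸ hk2m)
    have l2 : f k1 ≤ y2 := hgF3 y2 h2 k1 (heq ▸ hk1m)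
    rw [hk2] at l1; rw [hk1] at l2
    exact le_antisymm l2 l1
  exact Set.Countable.mono hsplit ((hSTc.union hSFc).union hrest)

noncomputable section

abbrev XX := ℕ → DoubleArrow

def aPt : DoubleArrow := mkT (1/2) (by norm_num) (by norm_num)
def bPt : DoubleArrow := mkT (1/3) (by norm_num) (by norm_num)

lemma aPt_ne_bPt : aPt ≠ bPt := by
  intro h
  have : (1/2 : ℝ) = 1/3 := congrArg fstv h
  norm_num at this

lemma ite_bPt_inj : ∀ x y : Bool, (if x then bPt else aPt) = (if y then bPt else aPt) → x = y := by
  intro x y hxy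
  cases x <;> cases y
  · rfl
  · rw [if_neg Bool.false_ne_true, if_pos rfl] at hxy
    exact absurd hxy aPt_ne_bPt
  · rw [if_pos rfl, if_neg Bool.false_ne_true] at hxy
    exact absurd hxy.symm aPt_ne_bPt
  · rfl

lemma ofFn_getD {α : Type*} {m : ℕ} (f : Fin m → α) (d : α) (a : ℕ) (h : a < m) :
    (List.ofFn f).getD a d = f ⟨a, h⟩ := by
  rw [List.getD_eq_getElem _ _ (by simpa using h), List.getElem_ofFn]

/-- The canonical Cantor set inside `XX`. -/
def g (σ : ℕ → Bool) : XX := fun n => if σ n then bPt else aPt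

lemma g_cont : Continuous g := by
  apply continuous_pi
  intro n
  exact (continuous_of_discreteTopology (f := fun b : Bool => if b then bPt else aPt)).comp
    (continuous_apply n)

/-- The countable dense subset of the Cantor set: eventually-false branches. -/
def qfun (l : List Bool) : XX := g (fun n => l.getD n false)

lemma qfun_apply (l : List Bool) (n : ℕ) :
    qfun l n = if l.getD n false then bPt else aPt := rfl

lemma g_inj : Function.Injective g := by
  intro σ τ h
  funext n
  exact ite_bPt_inj _ _ (congrFun h n)

lemma g_isEmbedding : Topology.IsEmbedding g :=
  (g_cont.isClosedEmbedding g_inj).toIsEmbedding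

def Q : Set XX := Set.range qfun

lemma Q_countable : Q.Countable := Set.countable_range _

lemma Q_nonempty : Q.Nonempty := ⟨qfun [], ⟨[], rfl⟩⟩

lemma Q_subset_range : Q ⊆ Set.range g := by
  rintro q ⟨l, rfl⟩
  exact ⟨_, rfl⟩

lemma range_g_isCompact : IsCompact (Set.range g) := isCompact_range g_cont

lemma range_g_isClosed : IsClosed (Set.range g) := range_g_isCompact.isClosed

lemma closure_Q_compact : IsCompact (closure Q) :=
  range_g_isCompact.of_isClosed_subset isClosed_closure
    (closure_minimal Q_subset_range range_g_isClosed)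

lemma closure_Q_secondCountable : SecondCountableTopology ↥(closure Q) := by
  have h1 : SecondCountableTopology ↥(Set.range g) :=
    ((g_isEmbedding.toHomeomorph).symm.isEmbedding).secondCountableTopology
  exact (Topology.IsEmbedding.inclusion
    (closure_minimal Q_subset_range range_g_isClosed)).secondCountableTopology

/-- Q is crowded. -/
lemma Q_crowded : ∀ q ∈ Q, q ∈ closure (Q \ {q}) := by
  rintro q ⟨l, rfl⟩
  rw [mem_closure_iff_nhds]
  intro U hU
  obtain ⟨V, hVU, hVopen, hqV⟩ := mem_nhds_iff.1 hU
  obtain ⟨I, u, hIu, hpi⟩ := isOpen_pi_iff.1 hVopen _ hqV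
  set M : ℕ := l.length + (I.sup id) + 1 with hM
  set l' : List Bool := List.ofFn (fun k : Fin (M + 1) => if k.1 = M then true else l.getD k.1 false) with hl'
  have hlen : l'.length = M + 1 := by rw [hl']; simp [hM]
  have hval : ∀ a : ℕ, a ≠ M → l'.getD a false = l.getD a false := by
    intro a ha
    by_cases hc : a < M + 1
    · rw [hl', ofFn_getD _ _ _ hc]
      simp [ha]
    · push_neg at hc
      rw [List.getD_eq_default _ _ (by rw [hlen]; omega), List.getD_eq_default _ _ (by omega)]
  have hvalM : l'.getD M false = true := by
    rw [hl', ofFn_getD _ _ _ (by omega : M < M + 1)]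
    simp
  have hvalM' : l.getD M false = false := List.getD_eq_default _ _ (by omega)
  refine ⟨qfun l', ?_, ⟨l', rfl⟩, ?_⟩
  · apply hVU
    apply hpi
    intro a haI
    have haM : a ≠ M := by
      intro h
      have : a ≤ I.sup id := Finset.le_sup (f := id) (Finset.mem_coe.1 haI)
      omega
    rw [qfun_apply, hval a haM, ← qfun_apply]
    exact (hIu a (Finset.mem_coe.1 haI)).2
  · intro h
    have := congrFun h M
    rw [qfun_apply, qfun_apply, hvalM, hvalM'] at this
    rw [if_pos rfl, if_neg Bool.false_ne_true] at this
    exact aPt_ne_bPt this.symm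

/-- Clamp a rational into the double arrow space as a "true" point. -/
def ψ (q : ℚ) : DoubleArrow :=
  if h : 0 < q ∧ q < 1 then
    mkT (q:ℝ) (by exact_mod_cast h.1.le) (by exact_mod_cast h.2) else aPt

def d₀fun (l : List ℚ) : XX := fun n => ψ (l.getD n (1/2))

def D₀ : Set XX := Set.range d₀fun

lemma D₀_dense : Dense D₀ := by
  intro x
  rw [mem_closure_iff_nhds]
  intro U hU
  obtain ⟨V, hVU, hVopen, hxV⟩ := mem_nhds_iff.1 hU
  obtain ⟨I, u, hIu, hpi⟩ := isOpen_pi_iff.1 hVopen _ hxV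
  have hsel : ∀ a, a ∈ I → ∃ q : ℚ, ψ q ∈ u a := by
    intro a haI
    obtain ⟨w1, w2, hw0, hww, hw1, hmem⟩ :=
      exists_interval ((hIu a haI).1.mem_nhds (hIu a haI).2)
    obtain ⟨q, hq1, hq2⟩ := exists_rat_btwn hww
    have hq0 : (0:ℝ) < q := lt_of_le_of_lt hw0 hq1
    have hq1' : (q:ℝ) < 1 := lt_of_lt_of_le hq2 hw1
    refine ⟨q, ?_⟩
    have hcond : 0 < q ∧ q < 1 := ⟨by exact_mod_cast hq0, by exact_mod_cast hq1'⟩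
    have hψ : ψ q = mkT (q:ℝ) hq0.le hq1' := by
      unfold ψ
      rw [dif_pos hcond]
    rw [hψ]
    exact hmem (q:ℝ) hq1 hq2 _ _
  choose! qsel hqsel using hsel
  set M : ℕ := I.sup id + 1 with hMdef
  set l : List ℚ := List.ofFn (fun k : Fin M => if k.1 ∈ I then qsel k.1 else 1/2) with hldef
  refine ⟨d₀fun l, hVU (hpi ?_), ⟨l, rfl⟩⟩
  intro a haI
  have haI' := Finset.mem_coe.1 haI
  have haM : a < M := lt_of_le_of_lt (Finset.le_sup (f := id) haI') (Nat.lt_succ_self _)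
  have hda : d₀fun l a = ψ (qsel a) := by
    show ψ (l.getD a (1/2)) = _
    rw [hldef, ofFn_getD _ _ _ haM]
    simp [haI']
  rw [hda]
  exact hqsel a haI'

lemma D₀_countable : D₀.Countable := Set.countable_range _

/-- The perturbed rational values used in coordinate 0 of `D`. -/
def qq (n : ℕ) : ℚ := (Denumerable.eqv ℚ).symm n
def code (ρ : ℚ) : ℕ := Denumerable.eqv ℚ ρ
lemma qq_code (ρ : ℚ) : qq (code ρ) = ρ := (Denumerable.eqv ℚ).symm_apply_apply ρ

def val (j i : ℕ) : ℝ :=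
  (qq (Nat.unpair i).1 : ℝ) + Real.sqrt 2 * (1/2)^(Nat.pair j i + 2)

lemma sqrt2_lt_two : Real.sqrt 2 < 2 := by
  have h4 : Real.sqrt 4 = 2 := by
    rw [show (4:ℝ) = 2^2 by norm_num]
    exact Real.sqrt_sq (by norm_num)
  calc Real.sqrt 2 < Real.sqrt 4 := Real.sqrt_lt_sqrt (by norm_num) (by norm_num)
    _ = 2 := h4

lemma val_btwn (j : ℕ) {a b : ℝ} (h0 : 0 ≤ a) (hab : a < b) (hb1 : b ≤ 1) :
    ∃ i, a < val j i ∧ val j i < b := by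
  obtain ⟨ρ, hρ1, hρ2⟩ := exists_rat_btwn (show a < (a+b)/2 by linarith)
  have hδ : (0:ℝ) < b - ρ := by linarith
  obtain ⟨s, hs⟩ := exists_pow_lt_of_lt_one hδ (by norm_num : (1/2:ℝ) < 1)
  set i : ℕ := Nat.pair (code ρ) s with hidef
  have hqq : (qq (Nat.unpair i).1 : ℝ) = (ρ:ℝ) := by
    have h1 : (Nat.unpair i).1 = code ρ := by rw [hidef, Nat.unpair_pair]
    rw [h1, qq_code]
  have hexp : s + 1 ≤ Nat.pair j i + 2 := by
    have h1 := Nat.right_le_pair (code ρ) s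
    have h2 := Nat.right_le_pair j i
    omega
  have hmon : (1/2:ℝ)^(Nat.pair j i + 2) ≤ (1/2)^(s+1) :=
    pow_le_pow_of_le_one (by norm_num) (by norm_num) hexp
  have htail_pos : 0 < Real.sqrt 2 * (1/2:ℝ)^(Nat.pair j i + 2) :=
    mul_pos (Real.sqrt_pos.2 two_pos) (by positivity)
  have htail_lt : Real.sqrt 2 * (1/2:ℝ)^(Nat.pair j i + 2) < b - ρ := by
    have h1 : Real.sqrt 2 * (1/2:ℝ)^(Nat.pair j i + 2) < 2 * (1/2)^(s+1) := by
      apply lt_of_lt_of_le (mul_lt_mul_of_pos_right sqrt2_lt_two (by positivity))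
      exact mul_le_mul_of_nonneg_left hmon (by norm_num)
    have h2 : (2:ℝ) * (1/2)^(s+1) = (1/2)^s := by
      rw [pow_succ]; ring
    rw [h2] at h1
    linarith
  refine ⟨i, ?_, ?_⟩
  · rw [val, hqq]; linarith
  · rw [val, hqq]; linarith

lemma val_inj {j i j' i' : ℕ} (h : val j i = val j' i') : j = j' ∧ i = i' := by
  by_cases hn : Nat.pair j i = Nat.pair j' i'
  · exact ⟨(Nat.pair_eq_pair.1 hn).1, (Nat.pair_eq_pair.1 hn).2⟩
  exfalso
  set n := Nat.pair j i + 2 with hndef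
  set n' := Nat.pair j' i' + 2 with hn'def
  have hnn : n ≠ n' := by
    intro hh
    exact hn (by omega)
  set c : ℚ := (1/2)^n' - (1/2)^n with hcdef
  have hstrict : StrictAnti (fun m : ℕ => ((1:ℚ)/2)^m) :=
    pow_right_strictAnti₀ (by norm_num) (by norm_num)
  have hc : c ≠ 0 := by
    intro hc0
    have : ((1:ℚ)/2)^n' = (1/2)^n := by
      have := sub_eq_zero.1 hc0
      linarith [this]
    exact hnn (hstrict.injective this).symm
  have hirr : Irrational (Real.sqrt 2 * (c:ℝ)) := irrational_sqrt_two.mul_ratCast hc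
  have hkey : ((qq (Nat.unpair i).1 - qq (Nat.unpair i').1 : ℚ) : ℝ) = Real.sqrt 2 * (c:ℝ) := by
    have hc' : (c:ℝ) = (1/2:ℝ)^n' - (1/2)^n := by
      rw [hcdef]; push_cast; ring
    rw [hc']
    push_cast
    simp only [val] at h
    rw [← hndef, ← hn'def] at h
    ring_nf
    ring_nf at h
    linarith
  exact Rat.not_irrational _ (hkey ▸ hirr)

def lcode (l : List ℚ) : ℕ := Denumerable.eqv (List ℚ) l

lemma lcode_inj : Function.Injective lcode := (Denumerable.eqv (List ℚ)).injective

/-- Points of `D`: a base point from `D₀` with coordinate 0 replaced by a perturbed value. -/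
def Fval (p : List ℚ × ℕ) : XX :=
  if h : 0 < val (lcode p.1) p.2 ∧ val (lcode p.1) p.2 < 1 then
    Function.update (d₀fun p.1) 0 (mkT (val (lcode p.1) p.2) h.1.le h.2)
  else d₀fun p.1

def Dgood : Set (List ℚ × ℕ) := {p | 0 < val (lcode p.1) p.2 ∧ val (lcode p.1) p.2 < 1}

def DD : Set XX := Fval '' Dgood

lemma DD_countable : DD.Countable := (Set.countable_univ.mono (Set.subset_univ Dgood)).image _

lemma Fval_zero {p : List ℚ × ℕ} (hp : p ∈ Dgood) :
    Fval p 0 = mkT (val (lcode p.1) p.2) hp.1.le hp.2 := by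
  have hp' : 0 < val (lcode p.1) p.2 ∧ val (lcode p.1) p.2 < 1 := hp
  unfold Fval
  rw [dif_pos hp']
  simp

lemma Fval_pos {p : List ℚ × ℕ} (hp : p ∈ Dgood) (n : ℕ) (hn : n ≠ 0) :
    Fval p n = d₀fun p.1 n := by
  have hp' : 0 < val (lcode p.1) p.2 ∧ val (lcode p.1) p.2 < 1 := hp
  unfold Fval
  rw [dif_pos hp']
  exact Function.update_of_ne hn _ _

lemma DD_spec {d : XX} (hd : d ∈ DD) :
    ∃ p ∈ Dgood, d = Fval p ∧ fstv (d 0) = val (lcode p.1) p.2 ∧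
      0 < fstv (d 0) ∧ fstv (d 0) < 1 ∧
      ∀ (h1 : 0 ≤ fstv (d 0)) (h2 : fstv (d 0) < 1), d 0 = mkT (fstv (d 0)) h1 h2 := by
  obtain ⟨p, hp, rfl⟩ := hd
  have h0 := Fval_zero hp
  have hf : fstv (Fval p 0) = val (lcode p.1) p.2 := by rw [h0]; simp
  refine ⟨p, hp, rfl, hf, by rw [hf]; exact hp.1, by rw [hf]; exact hp.2, ?_⟩
  intro h1 h2
  have hs : sndv (Fval p 0) = true := by rw [h0]; simp
  exact ext_iff.2 ⟨by simp, by simp [hs]⟩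

lemma DD_inj : ∀ d ∈ DD, ∀ d' ∈ DD, fstv (d 0) = fstv (d' 0) → d = d' := by
  intro d hd d' hd' hf
  obtain ⟨p, hp, rfl, hv, -, -, -⟩ := DD_spec hd
  obtain ⟨p', hp', rfl, hv', -, -, -⟩ := DD_spec hd'
  rw [hv, hv'] at hf
  obtain ⟨hj, hi⟩ := val_inj hf
  have : p = p' := Prod.ext (lcode_inj hj) hi
  rw [this]

lemma DD_dense : Dense DD := by
  intro x
  rw [mem_closure_iff_nhds]
  intro U hU
  obtain ⟨V, hVU, hVopen, hxV⟩ := mem_nhds_iff.1 hU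
  obtain ⟨I, u, hIu, hpi⟩ := isOpen_pi_iff.1 hVopen _ hxV
  -- coordinate 0 interval
  obtain ⟨w1, w2, hw0, hww, hw1, hmem0⟩ :
      ∃ w1 w2 : ℝ, 0 ≤ w1 ∧ w1 < w2 ∧ w2 ≤ 1 ∧ ∀ w, w1 < w → w < w2 →
        ∀ (g1 : (0:ℝ) ≤ w) (g2 : w < 1), mkT w g1 g2 ∈ (if 0 ∈ I then u 0 else Set.univ) := by
    by_cases h0I : 0 ∈ I
    · rw [if_pos h0I]
      exact exists_interval ((hIu 0 h0I).1.mem_nhds (hIu 0 h0I).2)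
    · rw [if_neg h0I]
      exact ⟨0, 1, le_rfl, one_pos, le_rfl, fun w _ _ _ _ => Set.mem_univ _⟩
  -- other coordinates
  have hsel : ∀ a, a ∈ I → ∃ q : ℚ, ψ q ∈ u a := by
    intro a haI
    obtain ⟨v1, v2, hv0, hvv, hv1, hmem⟩ :=
      exists_interval ((hIu a haI).1.mem_nhds (hIu a haI).2)
    obtain ⟨q, hq1, hq2⟩ := exists_rat_btwn hvv
    have hq0 : (0:ℝ) < q := lt_of_le_of_lt hv0 hq1
    have hq1' : (q:ℝ) < 1 := lt_of_lt_of_le hq2 hv1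
    refine ⟨q, ?_⟩
    have hcond : 0 < q ∧ q < 1 := ⟨by exact_mod_cast hq0, by exact_mod_cast hq1'⟩
    have hψ : ψ q = mkT (q:ℝ) hq0.le hq1' := by
      unfold ψ
      rw [dif_pos hcond]
    rw [hψ]
    exact hmem (q:ℝ) hq1 hq2 _ _
  choose! qsel hqsel using hsel
  set M : ℕ := I.sup id + 1 with hMdef
  set l : List ℚ := List.ofFn (fun k : Fin M => if k.1 ∈ I then qsel k.1 else 1/2) with hldef
  obtain ⟨i, hi1, hi2⟩ := val_btwn (lcode l) hw0 hww hw1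
  have hgood : (l, i) ∈ Dgood := ⟨lt_of_le_of_lt hw0 hi1, lt_of_lt_of_le hi2 hw1⟩
  refine ⟨Fval (l, i), hVU (hpi ?_), ⟨(l, i), hgood, rfl⟩⟩
  intro a haI
  have haI' := Finset.mem_coe.1 haI
  by_cases ha0 : a = 0
  · subst ha0
    rw [Fval_zero hgood]
    have := hmem0 _ hi1 hi2 hgood.1.le hgood.2
    rw [if_pos haI'] at this
    exact this
  · rw [Fval_pos hgood a ha0]
    have haM : a < M := lt_of_le_of_lt (Finset.le_sup (f := id) haI') (Nat.lt_succ_self _)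
    have hda : d₀fun l a = ψ (qsel a) := by
      show ψ (l.getD a (1/2)) = _
      rw [hldef, ofFn_getD _ _ _ haM]
      simp [haI']
    rw [hda]
    exact hqsel a haI'

lemma not_countable_cantor : ¬ Countable (ℕ → Bool) := by
  intro h
  obtain ⟨j, hj⟩ := Countable.exists_injective_nat (ℕ → Bool)
  classical
  have hinj : Function.Injective
      (fun s : Set ℕ => j (fun n => if n ∈ s then true else false)) := by
    intro s t hst
    have h2 := hj hst
    ext n
    have h3 := congrFun h2 n
    by_cases hns : n ∈ s <;> by_cases hnt : n ∈ t <;> simp [hns, hnt] at h3 ⊢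
  exact Function.cantor_injective _ hinj

lemma refute {DS : Set XX}
    (hDspec : ∀ d ∈ DS, 0 < fstv (d 0) ∧ fstv (d 0) < 1 ∧
      ∀ (h1 : 0 ≤ fstv (d 0)) (h2 : fstv (d 0) < 1), d 0 = mkT (fstv (d 0)) h1 h2)
    (hDinj : ∀ d ∈ DS, ∀ d' ∈ DS, fstv (d 0) = fstv (d' 0) → d = d')
    {A : Set XX} (hAD : A ⊆ DS) (hAne : A.Nonempty)
    (hAcr : ∀ a ∈ A, a ∈ closure (A \ {a}))
    (hK : IsCompact (closure A))
    (hsc : SecondCountableTopology ↥(closure A)) : False := by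
  classical
  set V : Set ℝ := (fun d : XX => fstv (d 0)) '' A with hVdef
  have hVsub : V ⊆ Ioo 0 1 := by
    rintro v ⟨a, ha, rfl⟩
    exact ⟨(hDspec a (hAD ha)).1, (hDspec a (hAD ha)).2.1⟩
  -- every point of V is an accumulation point of V
  have hVacc : ∀ x ∈ V, AccPt x (Filter.principal V) := by
    rintro x ⟨a, haA, hax⟩
    have hax' : fstv (a 0) = x := hax
    rw [accPt_iff_nhds]
    intro U hU
    obtain ⟨ε, hε, hball⟩ := Metric.mem_nhds_iff.1 hU
    have hxV : x ∈ V := ⟨a, haA, hax⟩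
    have hx0 : 0 < x := (hVsub hxV).1
    have hx1 : x < 1 := (hVsub hxV).2
    have hspec := hDspec a (hAD haA)
    have ha0 : a 0 = mkT (fstv (a 0)) hspec.1.le hspec.2.1 := hspec.2.2 _ _
    set m : ℝ := min (x + ε) 1 with hm
    have hxm : x < m := lt_min (by linarith) hx1
    have hm1 : m ≤ 1 := min_le_right _ _
    have hm0 : 0 < m := lt_trans hx0 hxm
    set W : Set XX := (fun d : XX => d 0) ⁻¹' (Ici (a 0) ∩ Iio (mkF m hm0 hm1)) with hW
    have hWopen : IsOpen W := by
      apply IsOpen.preimage (continuous_apply 0)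
      apply IsOpen.inter
      · rw [ha0, Ici_mkT (h1' := hspec.1) (h2' := hspec.2.1.le)]
        exact isOpen_Ioi
      · exact isOpen_Iio
    have haW : a ∈ W := by
      show a 0 ∈ Ici (a 0) ∩ Iio (mkF m hm0 hm1)
      refine ⟨Set.self_mem_Ici, ?_⟩
      show a 0 < mkF m hm0 hm1
      rw [ha0, mkT_lt_mkF, hax']
      exact hxm
    obtain ⟨a', ha'W, ha'A, ha'ne⟩ : ∃ a', a' ∈ W ∧ a' ∈ A ∧ a' ≠ a := by
      obtain ⟨a', h1, h2, h3⟩ := mem_closure_iff_nhds.1 (hAcr a haA) W (hWopen.mem_nhds haW)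
      exact ⟨a', h1, h2, h3⟩
    set y := fstv (a' 0) with hy
    have hyV : y ∈ V := ⟨a', ha'A, rfl⟩
    have hyx : y ≠ x := by
      intro h
      exact ha'ne (hDinj a' (hAD ha'A) a (hAD haA) (by rw [← hy, h, ← hax']))
    have hge : x ≤ y := by
      have h1 : a 0 ≤ a' 0 := ha'W.1
      rw [ha0, le_iff] at h1
      rw [← hax']
      rcases h1 with h | ⟨h, _⟩
      · exact le_of_lt (by simpa using h)
      · exact le_of_eq (by simpa using h)
    have hlt : y < m := by
      have h1 : a' 0 < mkF m hm0 hm1 := ha'W.2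
      rw [lt_iff] at h1
      rcases h1 with h | ⟨_, _, h⟩
      · simpa using h
      · simp at h
    refine ⟨y, ⟨hball ?_, hyV⟩, hyx⟩
    rw [Metric.mem_ball, Real.dist_eq, abs_of_nonneg (by linarith)]
    have : m ≤ x + ε := min_le_left _ _
    linarith
  have hpre : Preperfect V := fun x hx => hVacc x hx
  have hperf : Perfect (closure V) := hpre.perfect_closure
  have hVne : V.Nonempty := hAne.image _
  have hclne : (closure V).Nonempty := hVne.mono subset_closure
  obtain ⟨f, hfr, hfc, hfi⟩ := hperf.exists_nat_bool_injection hclne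
  -- countability of the first-coordinate projection of the closure
  have hcnt : ((fun d : XX => d 0) '' (closure A)).Countable := by
    haveI := hsc
    have hf0 : Continuous (fun k : ↥(closure A) => (k : XX) 0) :=
      (continuous_apply 0).comp continuous_subtype_val
    have h1 := countable_range_of_secondCountable _ hf0
    have heq : ((fun d : XX => d 0) '' closure A) =
        Set.range (fun k : ↥(closure A) => (k : XX) 0) := Set.image_eq_range _ _
    rw [heq]
    exact h1
  -- closure V is contained in the fstv-image of that projection
  have hπK_closed : IsClosed ((fun d : XX => d 0) '' (closure A)) :=
    (hK.image (continuous_apply 0)).isClosed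
  have hsubL : closure ((fun d : XX => d 0) '' A) ⊆ (fun d : XX => d 0) '' (closure A) :=
    closure_minimal (Set.image_mono subset_closure) hπK_closed
  have himg : closure V ⊆ fstv '' ((fun d : XX => d 0) '' (closure A)) := by
    intro x hxcl
    have hxIcc : x ∈ Icc (0:ℝ) 1 :=
      closure_minimal (hVsub.trans Ioo_subset_Icc_self) isClosed_Icc hxcl
    by_cases hxV : x ∈ V
    · obtain ⟨a, haA, hax⟩ := hxV
      exact ⟨a 0, Set.mem_image_of_mem _ (subset_closure haA), hax⟩
    · have hsplit : x ∈ closure (V ∩ Iio x) ∪ closure (V ∩ Ioi x) := by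
        have hVd : V ⊆ (V ∩ Iio x) ∪ (V ∩ Ioi x) := by
          intro v hv
          rcases lt_trichotomy v x with h | h | h
          · exact Or.inl ⟨hv, h⟩
          · exact absurd (h ▸ hv) hxV
          · exact Or.inr ⟨hv, h⟩
        have := closure_mono hVd hxcl
        rwa [closure_union] at this
      rcases hsplit with hlt | hgt
      · -- p = (x, false)
        have hne' : (V ∩ Iio x).Nonempty := by
          rcases (V ∩ Iio x).eq_empty_or_nonempty with h | h
          · rw [h, closure_empty] at hlt
            exact absurd hlt (Set.notMem_empty x)
          · exact h
        obtain ⟨v0, hv0V, hv0lt⟩ := hne'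
        have hx0 : 0 < x := lt_trans (hVsub hv0V).1 hv0lt
        have hx1 : x ≤ 1 := hxIcc.2
        refine ⟨mkF x hx0 hx1, hsubL ?_, by simp⟩
        rw [mem_closure_iff_nhds]
        intro U hU
        obtain ⟨lpt, hlpt, hsub⟩ := exists_Ioc_subset_of_mem_nhds hU
          ⟨mkT (x/2) (by linarith) (by linarith), by rw [mkT_lt_mkF]; linarith⟩
        have hlx : fstv lpt < x := by
          rw [lt_iff] at hlpt
          rcases hlpt with h | ⟨_, _, h⟩
          · simpa using h
          · simp at h
        obtain ⟨v, hv1, hv2, hv3⟩ :=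
          mem_closure_iff_nhds.1 hlt _ (isOpen_Ioi.mem_nhds hlx)
        obtain ⟨a, haA, hav⟩ := hv2
        have hav' : fstv (a 0) = v := hav
        refine ⟨a 0, hsub ⟨?_, ?_⟩, Set.mem_image_of_mem _ haA⟩
        · rw [lt_iff]; left; rw [hav']; exact hv1
        · rw [le_iff]; left; simp only [fstv_mkF]; rw [hav']; exact hv3
      · -- p = (x, true)
        have hne' : (V ∩ Ioi x).Nonempty := by
          rcases (V ∩ Ioi x).eq_empty_or_nonempty with h | h
          · rw [h, closure_empty] at hgt
            exact absurd hgt (Set.notMem_empty x)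
          · exact h
        obtain ⟨v0, hv0V, hv0gt⟩ := hne'
        have hx1 : x < 1 := lt_trans hv0gt (hVsub hv0V).2
        have hx0 : 0 ≤ x := hxIcc.1
        refine ⟨mkT x hx0 hx1, hsubL ?_, by simp⟩
        rw [mem_closure_iff_nhds]
        intro U hU
        obtain ⟨upt, hupt, hsub⟩ := exists_Ico_subset_of_mem_nhds hU
          ⟨mkF 1 one_pos le_rfl, by rw [mkT_lt_mkF]; exact hx1⟩
        have hux : x < fstv upt := by
          rw [lt_iff] at hupt
          rcases hupt with h | ⟨_, h, _⟩
          · simpa using h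
          · simp at h
        obtain ⟨v, hv1, hv2, hv3⟩ :=
          mem_closure_iff_nhds.1 hgt _ (isOpen_Iio.mem_nhds hux)
        obtain ⟨a, haA, hav⟩ := hv2
        have hav' : fstv (a 0) = v := hav
        refine ⟨a 0, hsub ⟨?_, ?_⟩, Set.mem_image_of_mem _ haA⟩
        · rw [le_iff]; left; simp only [fstv_mkT]; rw [hav']; exact hv3
        · rw [lt_iff]; left; rw [hav']; exact hv1
  have hclc : (closure V).Countable := (hcnt.image fstv).mono himg
  haveI := hclc.to_subtype
  have hcant : Countable (ℕ → Bool) :=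
    Function.Injective.countable
      (f := fun σ : ℕ → Bool => (⟨f σ, hfr (Set.mem_range_self σ)⟩ : ↥(closure V)))
      (fun σ τ h => hfi (congrArg Subtype.val h))
  exact not_countable_cantor hcant

lemma sc_image {Y Z : Type*} [TopologicalSpace Y] [TopologicalSpace Z] (e : Y ≃ₜ Z) (s : Set Y)
    (hs : SecondCountableTopology ↥s) : SecondCountableTopology ↥(⇑e '' s) := by
  haveI := hs
  have hmt : Set.MapsTo ⇑e.symm (⇑e '' s) s := by
    rintro z ⟨y, hy, rfl⟩
    rw [e.symm_apply_apply]
    exact hy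
  have hcomp : Subtype.val ∘ (hmt.restrict _ _ _) = ⇑e.symm ∘ Subtype.val := by
    funext z
    simp
  have hemb : Topology.IsEmbedding (hmt.restrict _ _ _) := by
    apply Topology.IsEmbedding.of_comp (Continuous.restrict hmt e.symm.continuous) continuous_subtype_val ?_
    rw [hcomp]
    exact (e.symm.isEmbedding).comp Topology.IsEmbedding.subtypeVal
  exact hemb.secondCountableTopology

end

end DA

/-- Countable dense homogeneity. -/
def CDH (X : Type*) [TopologicalSpace X] : Prop :=
  ∀ D E : Set X, D.Countable → Dense D → E.Countable → Dense E →
    ∃ h : X ≃ₜ X, h '' D = E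

theorem doubleArrow_power_not_CDH : ¬ CDH (ℕ → DoubleArrow) := by
  intro hCDH
  classical
  have hE_dense : Dense (DA.D₀ ∪ DA.Q) := DA.D₀_dense.mono Set.subset_union_left
  have hE_count : (DA.D₀ ∪ DA.Q).Countable := DA.D₀_countable.union DA.Q_countable
  obtain ⟨h, hh⟩ := hCDH DA.DD (DA.D₀ ∪ DA.Q) DA.DD_countable DA.DD_dense hE_count hE_dense
  set A : Set DA.XX := ⇑h.symm '' DA.Q with hA
  have hQE : DA.Q ⊆ DA.D₀ ∪ DA.Q := Set.subset_union_right
  have hsymmE : ⇑h.symm '' (DA.D₀ ∪ DA.Q) = DA.DD := by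
    rw [← hh]
    exact h.toEquiv.symm_image_image DA.DD
  have hAD : A ⊆ DA.DD := by
    rw [hA, ← hsymmE]
    exact Set.image_mono hQE
  have hAne : A.Nonempty := DA.Q_nonempty.image _
  have hAcr : ∀ a ∈ A, a ∈ closure (A \ {a}) := by
    rintro a ⟨q, hq, rfl⟩
    have h1 : A \ {h.symm q} = ⇑h.symm '' (DA.Q \ {q}) := by
      rw [hA, Set.image_diff h.symm.injective, Set.image_singleton]
    rw [h1, ← Homeomorph.image_closure]
    exact Set.mem_image_of_mem _ (DA.Q_crowded q hq)
  have hclA : closure A = ⇑h.symm '' closure DA.Q :=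
    (Homeomorph.image_closure h.symm DA.Q).symm
  have hK : IsCompact (closure A) := by
    rw [hclA]
    exact DA.closure_Q_compact.image h.symm.continuous
  have hsc : SecondCountableTopology ↥(closure A) := by
    rw [hclA]
    exact DA.sc_image h.symm _ DA.closure_Q_secondCountable
  refine DA.refute ?_ DA.DD_inj hAD hAne hAcr hK hsc
  intro d hd
  obtain ⟨p, hp, heq, hf, h1, h2, h3⟩ := DA.DD_spec hd
  exact ⟨h1, h2, h3⟩
end

section
/- The countable power ℚ^ω of the rationals is not countable dense homogeneous. -/
open Set Topology

/-- Every nonempty open subset of `ℚ` is infinite. -/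
lemma open_rat_infinite {U : Set ℚ} (hU : IsOpen U) {t : ℚ} (ht : t ∈ U) : U.Infinite := by
  intro hfin
  have h1 : IsClosed (U \ {t}) := (hfin.subset diff_subset).isClosed
  have h2 : IsOpen ({t} : Set ℚ) := by
    have he : ({t} : Set ℚ) = U ∩ (U \ {t})ᶜ := by
      ext y
      simp only [mem_singleton_iff, mem_inter_iff, mem_compl_iff, mem_diff, not_and, not_not]
      constructor
      · rintro rfl; exact ⟨ht, fun _ => rfl⟩
      · rintro ⟨hy, h⟩; exact h hy
    rw [he]
    exact hU.inter h1.isOpen_compl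
  have hne : (𝓝[≠] t).NeBot := inferInstance
  have hmem : ({t} : Set ℚ) ∈ 𝓝[≠] t :=
    mem_nhdsWithin_of_mem_nhds (h2.mem_nhds rfl)
  have hmem2 : ({t}ᶜ : Set ℚ) ∈ 𝓝[≠] t := self_mem_nhdsWithin
  have := Filter.nonempty_of_mem (Filter.inter_mem hmem hmem2)
  simp at this

/-- The countable dense set of indicators of finite sets. -/
lemma mem_indicator_range {y : ℕ → ℚ} (hb : ∀ i, y i = 0 ∨ y i = 1) {M : ℕ}
    (h0 : ∀ i, M < i → y i = 0) :
    y ∈ Set.range (fun s : Finset ℕ => fun i => if i ∈ s then (1 : ℚ) else 0) := by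
  refine ⟨(Finset.range (M + 1)).filter (fun i => y i = 1), ?_⟩
  funext i
  by_cases hi : i ∈ (Finset.range (M + 1)).filter (fun i => y i = 1)
  · simp only [hi, if_pos]
    exact ((Finset.mem_filter.mp hi).2).symm
  · simp only [hi, if_neg, not_false_iff]
    rcases lt_or_ge M i with h | h
    · exact (h0 i h).symm
    · rcases hb i with h1 | h1
      · exact h1.symm
      · exact absurd (Finset.mem_filter.mpr ⟨Finset.mem_range.mpr (by omega), h1⟩) hi

theorem rationals_power_not_CDH : ¬ CDH (ℕ → ℚ) := by
  intro hcdh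
  classical
  -- enumeration of the rationals
  obtain ⟨q, hq⟩ : ∃ q : ℕ → ℚ, Function.Surjective q :=
    ⟨(Denumerable.eqv ℚ).symm, (Denumerable.eqv ℚ).symm.surjective⟩
  -- the increasing cover of `ℚ^ω` by closed nowhere dense sets
  set F : ℕ → Set (ℕ → ℚ) := fun n => (fun x => x 0) ⁻¹' {r | ∃ k ≤ n, r = q k} with hF
  have hSfin : ∀ n, ({r | ∃ k ≤ n, r = q k} : Set ℚ).Finite := by
    intro n
    have : ({r | ∃ k ≤ n, r = q k} : Set ℚ) ⊆ q '' (Set.Iic n) := by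
      rintro r ⟨k, hk, rfl⟩; exact ⟨k, hk, rfl⟩
    exact ((Set.finite_Iic n).image q).subset this
  have hFclosed : ∀ n, IsClosed (F n) :=
    fun n => (hSfin n).isClosed.preimage (continuous_apply 0)
  have hFmono : ∀ {n m : ℕ}, n ≤ m → F n ⊆ F m := by
    rintro n m hnm x ⟨k, hk, hx⟩; exact ⟨k, hk.trans hnm, hx⟩
  have hFcover : ∀ x : ℕ → ℚ, ∃ n, x ∈ F n := by
    intro x
    obtain ⟨k, hk⟩ := hq (x 0)
    exact ⟨k, k, le_rfl, hk.symm⟩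
  -- each `F n` has dense complement
  have hFnwd : ∀ n, Dense (F n)ᶜ := by
    intro n
    rw [dense_iff_inter_open]
    intro U hU ⟨x, hx⟩
    obtain ⟨I, u, hIu, hpi⟩ := isOpen_pi_iff.mp hU x hx
    have : ∃ t : ℚ, t ∉ ({r | ∃ k ≤ n, r = q k} : Set ℚ) ∧ (0 ∈ I → t ∈ u 0) := by
      by_cases h0 : 0 ∈ I
      · have hinf : (u 0).Infinite := open_rat_infinite (hIu 0 h0).1 (hIu 0 h0).2
        obtain ⟨t, ht1, ht2⟩ := (hinf.diff (hSfin n)).nonempty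
        exact ⟨t, ht2, fun _ => ht1⟩
      · obtain ⟨t, -, ht2⟩ := (Set.infinite_univ.diff (hSfin n)).nonempty
        exact ⟨t, ht2, fun h => absurd h h0⟩
    obtain ⟨t, htS, htu⟩ := this
    refine ⟨Function.update x 0 t, hpi ?_, ?_⟩
    · intro i hi
      by_cases hi0 : i = 0
      · subst hi0; simpa using htu hi
      · simpa [Function.update_of_ne hi0] using (hIu i hi).2
    · intro hmem
      rw [Set.mem_preimage, Function.update_self] at hmem
      exact htS hmem
  -- the countable dense set E meeting each F n finitely
  obtain ⟨b, hbc, hbne, hbB⟩ := TopologicalSpace.exists_countable_basis (ℕ → ℚ)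
  have hbnonempty : b.Nonempty := by
    obtain ⟨B, hB, -, -⟩ := hbB.exists_subset_of_mem_open (Set.mem_univ (fun _ => (0:ℚ)))
      isOpen_univ
    exact ⟨B, hB⟩
  obtain ⟨f, hf⟩ := hbc.exists_eq_range hbnonempty
  have hfopen : ∀ k, IsOpen (f k) := by
    intro k; exact hbB.isOpen (hf ▸ Set.mem_range_self k)
  have hfne : ∀ k, (f k).Nonempty := by
    intro k
    rcases Set.eq_empty_or_nonempty (f k) with h | h
    · exact absurd (hf ▸ Set.mem_range_self k : f k ∈ b) (h ▸ hbne)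
    · exact h
  have he : ∀ k, ∃ x, x ∈ f k ∧ x ∉ F k := by
    intro k
    obtain ⟨x, hx1, hx2⟩ := ((hFnwd k).inter_open_nonempty (f k) (hfopen k) (hfne k))
    exact ⟨x, hx1, hx2⟩
  choose e he1 he2 using he
  set E : Set (ℕ → ℚ) := Set.range e with hE
  have hEc : E.Countable := Set.countable_range e
  have hEd : Dense E := by
    rw [dense_iff_inter_open]
    intro U hU ⟨x, hx⟩
    obtain ⟨B, hB, hxB, hBU⟩ := hbB.exists_subset_of_mem_open hx hU
    obtain ⟨k, rfl⟩ := (hf ▸ hB : B ∈ Set.range f)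
    exact ⟨e k, hBU (he1 k), Set.mem_range_self k⟩
  have hEFfin : ∀ n, (E ∩ F n).Finite := by
    intro n
    have hsub : E ∩ F n ⊆ e '' (Set.Iic n) := by
      rintro x ⟨⟨k, rfl⟩, hxF⟩
      by_cases hk : k ≤ n
      · exact ⟨k, hk, rfl⟩
      · exact absurd (hFmono (le_of_not_ge hk) hxF) (he2 k)
    exact ((Set.finite_Iic n).image e).subset hsub
  -- the countable dense set D containing indicators of finite sets
  obtain ⟨D₀, hD₀c, hD₀d⟩ := TopologicalSpace.exists_countable_dense (ℕ → ℚ)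
  set D₁ : Set (ℕ → ℚ) := Set.range (fun s : Finset ℕ => fun i => if i ∈ s then (1 : ℚ) else 0)
    with hD₁
  set D : Set (ℕ → ℚ) := D₀ ∪ D₁ with hD
  have hDc : D.Countable := hD₀c.union (Set.countable_range _)
  have hDd : Dense D := hD₀d.mono Set.subset_union_left
  -- apply CDH
  obtain ⟨h, hh⟩ := hcdh D E hDc hDd hEc hEd
  -- D meets each h ⁻¹' (F n) finitely
  have hDGfin : ∀ n, (D ∩ h ⁻¹' (F n)).Finite := by
    intro n
    have hsub : D ∩ h ⁻¹' (F n) ⊆ h ⁻¹' (E ∩ F n) := by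
      rintro x ⟨hxD, hxF⟩
      exact ⟨hh ▸ Set.mem_image_of_mem h hxD, hxF⟩
    exact ((hEFfin n).preimage h.injective.injOn).subset hsub
  -- the Cantor cube
  set K : Set (ℕ → ℚ) := Set.pi Set.univ (fun _ => ({0, 1} : Set ℚ)) with hKdef
  have hK : IsCompact K :=
    isCompact_univ_pi (fun _ => (Set.toFinite ({0,1} : Set ℚ)).isCompact)
  haveI : CompactSpace K := isCompact_iff_compactSpace.mp hK
  -- Baire category on K
  set g : ℕ → Set K := fun n => Subtype.val ⁻¹' (h ⁻¹' (F n)) with hg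
  have hgclosed : ∀ n, IsClosed (g n) :=
    fun n => ((hFclosed n).preimage h.continuous).preimage continuous_subtype_val
  have hgcover : ⋃ n, g n = Set.univ := by
    ext x
    simp only [Set.mem_iUnion, Set.mem_univ, iff_true]
    exact hFcover (h x)
  haveI : Nonempty K := ⟨⟨fun _ => 0, fun i _ => by simp⟩⟩
  obtain ⟨n, x, hx⟩ := nonempty_interior_of_iUnion_of_closed hgclosed hgcover
  -- extract an open set V of the product containing x with V ∩ K ⊆ h ⁻¹' (F n)
  obtain ⟨V, hVopen, hVeq⟩ := isOpen_induced_iff.mp (isOpen_interior (s := g n))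
  have hxV : (x : ℕ → ℚ) ∈ V := by
    have : x ∈ Subtype.val ⁻¹' V := hVeq ▸ hx
    exact this
  have hVK : ∀ y : ℕ → ℚ, y ∈ K → y ∈ V → h y ∈ F n := by
    intro y hyK hyV
    have h1 : (⟨y, hyK⟩ : K) ∈ interior (g n) := hVeq ▸ (hyV : (⟨y, hyK⟩ : K) ∈ Subtype.val ⁻¹' V)
    have h2 : (⟨y, hyK⟩ : K) ∈ g n := interior_subset h1
    exact h2
  -- x is binary
  have hxbin : ∀ i, (x : ℕ → ℚ) i = 0 ∨ (x : ℕ → ℚ) i = 1 := by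
    intro i
    have hx2 := x.2
    rw [Set.mem_univ_pi] at hx2
    simpa using hx2 i
  -- basic open neighborhood
  obtain ⟨I, u, hIu, hpi⟩ := isOpen_pi_iff.mp hVopen _ hxV
  set N : ℕ := I.sup id with hN
  -- the approximating sequences
  set y : ℕ → ℕ → ℚ := fun m i =>
    if i ≤ m then (x : ℕ → ℚ) i else if i = m + 1 then 1 - (x : ℕ → ℚ) (m + 1) else 0 with hy
  have hybin : ∀ m i, y m i = 0 ∨ y m i = 1 := by
    intro m i
    simp only [hy]
    split
    · exact hxbin i
    · split
      · rcases hxbin (m + 1) with hx1 | hx1 <;> rw [hx1] <;> norm_num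
      · exact Or.inl rfl
  have hyD₁ : ∀ m, y m ∈ D₁ := by
    intro m
    exact mem_indicator_range (hybin m) (M := m + 1) (fun i hi => by
      simp only [hy]
      rw [if_neg (by omega), if_neg (by omega)])
  have hyK : ∀ m, y m ∈ K := by
    intro m i _
    rcases hybin m i with h1 | h1 <;> simp [h1]
  have hyV : ∀ m, N ≤ m → y m ∈ V := by
    intro m hm
    apply hpi
    intro i hi
    have hiN : i ≤ m := le_trans (Finset.le_sup (f := id) hi) hm
    have : y m i = (x : ℕ → ℚ) i := by simp only [hy]; rw [if_pos hiN]
    rw [this]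
    exact (hIu i hi).2
  have hyinj : Function.Injective y := by
    intro m m' hmm
    by_contra hne
    wlog hlt : m < m' generalizing m m'
    · exact this hmm.symm (Ne.symm hne) (by omega)
    have h1 : y m (m + 1) = 1 - (x : ℕ → ℚ) (m + 1) := by
      simp only [hy]; rw [if_neg (by omega)]; simp
    have h2 : y m' (m + 1) = (x : ℕ → ℚ) (m + 1) := by
      simp only [hy]; rw [if_pos (by omega)]
    rw [hmm, h2] at h1
    rcases hxbin (m + 1) with hx1 | hx1 <;> rw [hx1] at h1 <;> norm_num at h1
  -- infinitely many points of D in h ⁻¹' (F n)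
  have hinj2 : Function.Injective (fun m : ℕ => y (N + m)) := by
    intro a b hab
    have := hyinj hab
    omega
  have hinf : (D ∩ h ⁻¹' (F n)).Infinite :=
    Set.infinite_of_injective_forall_mem hinj2 (fun m =>
      ⟨Or.inr (hyD₁ (N + m)), hVK _ (hyK (N + m)) (hyV (N + m) (Nat.le_add_right N m))⟩)
  exact hinf (hDGfin n)
end

section
/- The Sorgenfrey line 𝕊 is countable dense homogeneous: for any two countable dense subsets D, E of 𝕊 there is a homeomorphism h : 𝕊 → 𝕊 with h[D] = E. -/
open Set Topology

/-- The Sorgenfrey line: ℝ with the topology generated by half-open intervals [a,b). -/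
def SorgenfreyLine : Type := ℝ

instance : TopologicalSpace SorgenfreyLine :=
  TopologicalSpace.generateFrom {s : Set ℝ | ∃ a b : ℝ, s = Set.Ico a b}

section Aux

/-- "Order density" of a subset of ℝ. -/
def OrdDense (D : Set ℝ) : Prop := ∀ a b : ℝ, a < b → ∃ d ∈ D, a < d ∧ d < b

variable {D E : Set ℝ}

/-- Extension of an order iso between two subsets of ℝ to all of ℝ, by suprema. -/
noncomputable def extFun (f : ↥D ≃o ↥E) (x : ℝ) : ℝ :=
  sSup ((fun d : D => (f d : ℝ)) '' {d : D | (d : ℝ) < x})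

lemma extFun_set_nonempty (hD : OrdDense D) (f : ↥D ≃o ↥E) (x : ℝ) :
    ((fun d : D => (f d : ℝ)) '' {d : D | (d : ℝ) < x}).Nonempty := by
  obtain ⟨d, hd, h1, h2⟩ := hD (x - 1) x (by linarith)
  exact ⟨f ⟨d, hd⟩, ⟨⟨d, hd⟩, h2, rfl⟩⟩

lemma extFun_set_bddAbove (hD : OrdDense D) (f : ↥D ≃o ↥E) (x : ℝ) :
    BddAbove ((fun d : D => (f d : ℝ)) '' {d : D | (d : ℝ) < x}) := by
  obtain ⟨d, hd, h1, h2⟩ := hD x (x + 1) (by linarith)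
  refine ⟨f ⟨d, hd⟩, ?_⟩
  rintro y ⟨d', hd', rfl⟩
  have : d' < (⟨d, hd⟩ : D) := Subtype.mk_lt_mk.mpr (lt_trans hd' h1)
  exact le_of_lt (Subtype.coe_lt_coe.mpr (f.strictMono this))

lemma le_extFun (hD : OrdDense D) (f : ↥D ≃o ↥E) {x : ℝ} {d : D} (h : (d : ℝ) < x) :
    (f d : ℝ) ≤ extFun f x :=
  le_csSup (extFun_set_bddAbove hD f x) ⟨d, h, rfl⟩

lemma extFun_le (hD : OrdDense D) (f : ↥D ≃o ↥E) {x : ℝ} {d : D} (h : x ≤ (d : ℝ)) :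
    extFun f x ≤ (f d : ℝ) := by
  apply csSup_le (extFun_set_nonempty hD f x)
  rintro y ⟨d', hd', rfl⟩
  rcases eq_or_lt_of_le (le_trans (le_of_lt hd') h) with h' | h'
  · exact le_of_eq (congrArg _ (congrArg _ (Subtype.ext h')))
  · exact le_of_lt (Subtype.coe_lt_coe.mpr (f.strictMono (Subtype.mk_lt_mk.mpr h')))

lemma extFun_strictMono (hD : OrdDense D) (f : ↥D ≃o ↥E) : StrictMono (extFun f) := by
  intro x y hxy
  obtain ⟨d₁, hd₁, h1, h2⟩ := hD x y hxy
  obtain ⟨d₂, hd₂, h3, h4⟩ := hD d₁ y h2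
  calc extFun f x ≤ (f ⟨d₁, hd₁⟩ : ℝ) := extFun_le hD f (le_of_lt h1)
    _ < (f ⟨d₂, hd₂⟩ : ℝ) := Subtype.coe_lt_coe.mpr (f.strictMono (Subtype.mk_lt_mk.mpr h3))
    _ ≤ extFun f y := le_extFun hD f h4

lemma extFun_coe (hD : OrdDense D) (hE : OrdDense E) (f : ↥D ≃o ↥E) (d : D) :
    extFun f (d : ℝ) = (f d : ℝ) := by
  refine le_antisymm (extFun_le hD f le_rfl) (le_of_forall_lt fun z hz => ?_)
  obtain ⟨e, he, h1, h2⟩ := hE z (f d) hz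
  have hlt : f.symm ⟨e, he⟩ < d := by
    rw [← f.symm_apply_apply d]
    exact f.symm.strictMono (Subtype.mk_lt_mk.mpr h2)
  have := le_extFun hD f (x := (d : ℝ)) (d := f.symm ⟨e, he⟩) (Subtype.coe_lt_coe.mpr hlt)
  rw [f.apply_symm_apply] at this
  exact lt_of_lt_of_le h1 this

lemma extFun_extFun_symm (hD : OrdDense D) (hE : OrdDense E) (f : ↥D ≃o ↥E) (y : ℝ) :
    extFun f (extFun f.symm y) = y := by
  refine le_antisymm ?_ (le_of_forall_lt fun z hz => ?_)
  · apply csSup_le (extFun_set_nonempty hD f _)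
    rintro w ⟨d, hd, rfl⟩
    obtain ⟨t, ⟨e, he, rfl⟩, ht⟩ := exists_lt_of_lt_csSup (extFun_set_nonempty hE f.symm y) hd
    have hlt : f d < e := by
      rw [← f.apply_symm_apply e]
      exact f.strictMono (Subtype.coe_lt_coe.mp ht)
    exact le_of_lt (lt_trans (Subtype.coe_lt_coe.mpr hlt) he.out)
  · obtain ⟨e, he, h1, h2⟩ := hE z y hz
    obtain ⟨e', he', h3, h4⟩ := hE e y h2
    have hlt : (f.symm ⟨e, he⟩ : ℝ) < extFun f.symm y := by
      have h5 : (f.symm ⟨e, he⟩ : ℝ) < (f.symm ⟨e', he'⟩ : ℝ) :=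
        Subtype.coe_lt_coe.mpr (f.symm.strictMono (Subtype.mk_lt_mk.mpr h3))
      exact lt_of_lt_of_le h5 (le_extFun hE f.symm h4)
    have := le_extFun hD f (x := extFun f.symm y) (d := f.symm ⟨e, he⟩) hlt
    rw [f.apply_symm_apply] at this
    exact lt_of_lt_of_le h1 this

lemma exists_orderIso (hDc : D.Countable) (hD : OrdDense D)
    (hEc : E.Countable) (hE : OrdDense E) : ∃ g : ℝ ≃o ℝ, g '' D = E := by
  haveI : Countable D := hDc.to_subtype
  haveI : Countable E := hEc.to_subtype
  haveI : DenselyOrdered D := ⟨fun a b hab => by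
    obtain ⟨d, hd, h1, h2⟩ := hD a b hab
    exact ⟨⟨d, hd⟩, Subtype.mk_lt_mk.mpr h1, Subtype.mk_lt_mk.mpr h2⟩⟩
  haveI : DenselyOrdered E := ⟨fun a b hab => by
    obtain ⟨d, hd, h1, h2⟩ := hE a b hab
    exact ⟨⟨d, hd⟩, Subtype.mk_lt_mk.mpr h1, Subtype.mk_lt_mk.mpr h2⟩⟩
  haveI : NoMinOrder D := ⟨fun a => by
    obtain ⟨d, hd, h1, h2⟩ := hD (a - 1) a (by linarith)
    exact ⟨⟨d, hd⟩, Subtype.mk_lt_mk.mpr h2⟩⟩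
  haveI : NoMinOrder E := ⟨fun a => by
    obtain ⟨d, hd, h1, h2⟩ := hE (a - 1) a (by linarith)
    exact ⟨⟨d, hd⟩, Subtype.mk_lt_mk.mpr h2⟩⟩
  haveI : NoMaxOrder D := ⟨fun a => by
    obtain ⟨d, hd, h1, h2⟩ := hD a (a + 1) (by linarith)
    exact ⟨⟨d, hd⟩, Subtype.mk_lt_mk.mpr h1⟩⟩
  haveI : NoMaxOrder E := ⟨fun a => by
    obtain ⟨d, hd, h1, h2⟩ := hE a (a + 1) (by linarith)
    exact ⟨⟨d, hd⟩, Subtype.mk_lt_mk.mpr h1⟩⟩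
  haveI : Nonempty D := by
    obtain ⟨d, hd, _, _⟩ := hD 0 1 one_pos; exact ⟨⟨d, hd⟩⟩
  haveI : Nonempty E := by
    obtain ⟨d, hd, _, _⟩ := hE 0 1 one_pos; exact ⟨⟨d, hd⟩⟩
  obtain ⟨f⟩ := Order.iso_of_countable_dense (↥D) (↥E)
  have hsurj : Function.Surjective (extFun f) := fun y =>
    ⟨extFun f.symm y, extFun_extFun_symm hD hE f y⟩
  refine ⟨StrictMono.orderIsoOfSurjective _ (extFun_strictMono hD f) hsurj, ?_⟩
  rw [show ((StrictMono.orderIsoOfSurjective _ (extFun_strictMono hD f) hsurj : ℝ ≃o ℝ)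
      : ℝ → ℝ) = extFun f from rfl]
  apply Set.eq_of_subset_of_subset
  · rintro _ ⟨d, hd, rfl⟩
    rw [extFun_coe hD hE f ⟨d, hd⟩]
    exact (f ⟨d, hd⟩).2
  · intro e he
    refine ⟨(f.symm ⟨e, he⟩ : ℝ), (f.symm ⟨e, he⟩).2, ?_⟩
    rw [extFun_coe hD hE f (f.symm ⟨e, he⟩), f.apply_symm_apply]

def toS (s : Set ℝ) : Set SorgenfreyLine := s

lemma sorgenfrey_isOpen_Ico (a b : ℝ) :
    IsOpen (X := SorgenfreyLine) (toS (Set.Ico a b)) :=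
  TopologicalSpace.isOpen_generateFrom_of_mem ⟨a, b, rfl⟩

lemma orderIso_continuous_sorgenfrey (g : ℝ ≃o ℝ) :
    Continuous (X := SorgenfreyLine) (Y := SorgenfreyLine) g := by
  apply continuous_generateFrom_iff.mpr
  rintro s ⟨a, b, rfl⟩
  show IsOpen (X := SorgenfreyLine) (toS ((g : ℝ → ℝ) ⁻¹' Set.Ico a b))
  rw [show (g : ℝ → ℝ) ⁻¹' Set.Ico a b = Set.Ico (g.symm a) (g.symm b) from
    g.preimage_Ico a b]
  exact sorgenfrey_isOpen_Ico _ _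

end Aux

theorem sorgenfrey_CDH : CDH SorgenfreyLine := by
  intro D E hDc hDd hEc hEd
  have key : ∀ (S : Set ℝ), Dense (X := SorgenfreyLine) S → OrdDense S := by
    intro S hS a b hab
    obtain ⟨c, hc1, hc2⟩ := exists_between hab
    obtain ⟨d, hdS, hd⟩ := hS.exists_mem_open (sorgenfrey_isOpen_Ico c b) ⟨c, le_refl c, hc2⟩
    exact ⟨d, hdS, lt_of_lt_of_le hc1 hd.1, hd.2⟩
  obtain ⟨g, hg⟩ := exists_orderIso hDc (key D hDd) hEc (key E hEd)
  refine ⟨⟨g.toEquiv, orderIso_continuous_sorgenfrey g,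
    orderIso_continuous_sorgenfrey g.symm⟩, hg⟩
end

section
/- The countable power 𝕊^ω of the Sorgenfrey line is not countable dense homogeneous. -/
open Set Topology

namespace SL

open Filter

noncomputable instance : Field SorgenfreyLine := inferInstanceAs (Field ℝ)
noncomputable instance : LinearOrder SorgenfreyLine := inferInstanceAs (LinearOrder ℝ)
instance : IsStrictOrderedRing SorgenfreyLine := inferInstanceAs (IsStrictOrderedRing ℝ)
instance : Archimedean SorgenfreyLine := inferInstanceAs (Archimedean ℝ)

abbrev X : Type := ℕ → SorgenfreyLine

lemma isOpen_Ico (a b : SorgenfreyLine) : IsOpen (Set.Ico a b) :=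
  TopologicalSpace.isOpen_generateFrom_of_mem ⟨a, b, rfl⟩

lemma exists_Ico_subset {u : Set SorgenfreyLine} (hu : IsOpen u) :
    ∀ {x : SorgenfreyLine}, x ∈ u → ∃ b, x < b ∧ Set.Ico x b ⊆ u := by
  have hg : TopologicalSpace.GenerateOpen {s : Set ℝ | ∃ a b : ℝ, s = Set.Ico a b} u := hu
  clear hu
  induction hg with
  | basic s hs =>
    obtain ⟨a, b, rfl⟩ := hs
    intro x hx
    exact ⟨b, hx.2, fun y hy => ⟨le_trans hx.1 hy.1, hy.2⟩⟩
  | univ => exact fun {x} _ => ⟨x + 1, lt_add_one x, fun _ _ => trivial⟩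
  | inter s t _ _ ihs iht =>
    intro x hx
    obtain ⟨b1, hb1, hs1⟩ := ihs hx.1
    obtain ⟨b2, hb2, hs2⟩ := iht hx.2
    exact ⟨min b1 b2, lt_min hb1 hb2,
      fun y hy => ⟨hs1 ⟨hy.1, lt_of_lt_of_le hy.2 (min_le_left _ _)⟩,
        hs2 ⟨hy.1, lt_of_lt_of_le hy.2 (min_le_right _ _)⟩⟩⟩
  | sUnion S _ ih =>
    intro x hx
    obtain ⟨t, htS, hxt⟩ := hx
    obtain ⟨b, hb, hsub⟩ := ih t htS hxt
    exact ⟨b, hb, fun y hy => ⟨t, htS, hsub hy⟩⟩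

/-! ### The Cantor cube inside the power -/

/-- embedding of the Cantor cube -/
noncomputable def g (b : ℕ → Bool) : X := fun k => if b k then 1 else 0

lemma g_cont : Continuous g := by
  apply continuous_pi
  intro k
  exact (continuous_of_discreteTopology (α := Bool)
    (f := fun v : Bool => (if v then (1:SorgenfreyLine) else 0))).comp (continuous_apply k)

def Q : Set X := Set.range g

lemma Q_compact : IsCompact Q := isCompact_range g_cont

def A : Set X := Set.range (fun l : List Bool => g (fun k => l.getD k false))

lemma A_countable : A.Countable := Set.countable_range _

lemma A_sub_Q : A ⊆ Q := by
  rintro x ⟨l, rfl⟩; exact ⟨_, rfl⟩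

lemma A_nonempty : A.Nonempty := ⟨_, ⟨([] : List Bool), rfl⟩⟩

lemma g_inj_coord {b c : ℕ → Bool} {k : ℕ} (h : g b k = g c k) : b k = c k := by
  by_contra hne
  cases hb : b k <;> cases hc : c k <;> simp [hb, hc] at hne <;>
    simp [g, hb, hc] at h

lemma A_crowded : ∀ p ∈ A, p ∈ closure (A \ {p}) := by
  rintro p ⟨l, rfl⟩
  set b : ℕ → Bool := fun k => l.getD k false with hb
  have happrox : ∀ n : ℕ, ∃ pn ∈ A \ {g b}, ∀ k < n, pn k = g b k := by
    intro n
    refine ⟨g (fun k => (List.ofFn (fun j : Fin (n+1) =>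
      if (j : ℕ) = n then !(b n) else b j)).getD k false), ⟨⟨_, rfl⟩, ?_⟩, ?_⟩
    · intro hEq
      simp only [Set.mem_singleton_iff] at hEq
      have := congrFun hEq n
      have hcoord := g_inj_coord this
      have : (List.ofFn (fun j : Fin (n+1) =>
        if (j : ℕ) = n then !(b n) else b j)).getD n false = !(b n) := by
        rw [List.getD_eq_getElem?_getD, List.getElem?_ofFn]
        simp [List.ofFnNthVal]
      rw [this] at hcoord
      simp at hcoord
    · intro k hk
      have : (List.ofFn (fun j : Fin (n+1) =>
        if (j : ℕ) = n then !(b n) else b j)).getD k false = b k := by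
        have hk1 : k < n + 1 := Nat.lt_succ_of_lt hk
        rw [List.getD_eq_getElem?_getD, List.getElem?_ofFn]
        simp [List.ofFnNthVal, hk1, Nat.ne_of_lt hk]
      simp only [g, this]
  choose pn hpn hcoord using happrox
  have htend : Filter.Tendsto pn Filter.atTop (nhds (g b)) := by
    rw [tendsto_pi_nhds]
    intro k
    apply Filter.Tendsto.congr' _ (tendsto_const_nhds (x := g b k))
    filter_upwards [Filter.eventually_ge_atTop (k+1)] with n hn
    exact (hcoord n k (Nat.lt_of_lt_of_le (Nat.lt_succ_self k) hn)).symm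
  exact mem_closure_of_tendsto htend (Filter.Eventually.of_forall hpn)

/-! ### A countable dense set whose points pairwise differ at every coordinate -/

noncomputable def pickQ (t : ℝ) (a b : ℚ) (h : (a:ℝ) < b) : ℚ :=
  (exists_rat_btwn (show (a:ℝ) - t < (b:ℝ) - t by linarith)).choose

lemma pickQ_spec (t : ℝ) (a b : ℚ) (h : (a:ℝ) < b) :
    (a:ℝ) < (pickQ t a b h : ℝ) + t ∧ ((pickQ t a b h : ℝ) + t) < b := by
  unfold pickQ
  have := (exists_rat_btwn (show (a:ℝ) - t < (b:ℝ) - t by linarith)).choose_spec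
  constructor <;> linarith [this.1, this.2]

noncomputable def dval (t : ℝ) : Option (ℚ × ℚ) → ℝ
  | some (a, b) => if h : (a:ℝ) < (b:ℝ) then (pickQ t a b h : ℝ) + t else t
  | none => t

lemma dval_form (t : ℝ) (o : Option (ℚ × ℚ)) : ∃ q : ℚ, dval t o = (q:ℝ) + t := by
  match o with
  | none => exact ⟨0, by simp [dval]⟩
  | some (a, b) =>
    by_cases h : (a:ℝ) < (b:ℝ)
    · exact ⟨pickQ t a b h, by simp [dval, h]⟩
    · exact ⟨0, by simp [dval, h]⟩

noncomputable def dR (i : ℕ) : ℕ → ℝ := fun k =>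
  dval (i * Real.sqrt 2) ((Denumerable.ofNat (List (ℚ × ℚ)) i)[k]?)

noncomputable def d (i : ℕ) : X := fun k => (dR i k : ℝ)

lemma d_collision {i j k : ℕ} (h : d i k = d j k) : i = j := by
  obtain ⟨q1, hq1⟩ := dval_form (i * Real.sqrt 2) ((Denumerable.ofNat (List (ℚ × ℚ)) i)[k]?)
  obtain ⟨q2, hq2⟩ := dval_form (j * Real.sqrt 2) ((Denumerable.ofNat (List (ℚ × ℚ)) j)[k]?)
  have hR : (q1:ℝ) + i * Real.sqrt 2 = (q2:ℝ) + j * Real.sqrt 2 := by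
    have : dR i k = dR j k := h
    rw [dR, hq1, dR, hq2] at this
    exact this
  by_contra hne
  have hc : ((i:ℚ) - (j:ℚ)) ≠ 0 := by
    simp only [sub_ne_zero]
    exact_mod_cast hne
  have hirr : Irrational (((i:ℝ) - (j:ℝ)) * Real.sqrt 2) := by
    have := (irrational_sqrt_two).ratCast_mul hc
    push_cast at this
    exact this
  apply hirr
  refine ⟨q2 - q1, ?_⟩
  push_cast
  linarith

def D : Set X := Set.range d

lemma D_countable : D.Countable := Set.countable_range _

lemma D_dense : Dense D := by
  rw [dense_iff_inter_open]
  intro U hU ⟨x, hx⟩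
  obtain ⟨I, u, hu, hsub⟩ := isOpen_pi_iff.mp hU x hx
  have hpair : ∀ k ∈ I, ∃ p : ℚ × ℚ, (p.1:ℝ) < (p.2:ℝ) ∧
      Set.Ico ((p.1:ℝ) : SorgenfreyLine) ((p.2:ℝ) : SorgenfreyLine) ⊆ u k := by
    intro k hk
    obtain ⟨c, hc, hIco⟩ := exists_Ico_subset (hu k hk).1 (hu k hk).2
    obtain ⟨a, ha1, ha2⟩ := exists_rat_btwn hc
    obtain ⟨b, hb1, hb2⟩ := exists_rat_btwn ha2
    refine ⟨(a, b), ?_, ?_⟩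
    · exact_mod_cast hb1
    · intro y hy
      apply hIco
      constructor
      · exact le_trans (le_of_lt ha1) hy.1
      · exact lt_trans hy.2 hb2
  classical
  set F : ℕ → ℚ × ℚ := fun k => if hk : k ∈ I then (hpair k hk).choose else (0, 1) with hF
  set N : ℕ := I.sup id + 1 with hN
  set l : List (ℚ × ℚ) := List.ofFn (fun j : Fin N => F j) with hl
  set i : ℕ := @Encodable.encode (List (ℚ × ℚ)) Denumerable.toEncodable l with hi
  have hofnat : Denumerable.ofNat (List (ℚ × ℚ)) i = l := by
    rw [hi]; exact Denumerable.ofNat_encode l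
  refine ⟨d i, ?_, ⟨i, rfl⟩⟩
  apply hsub
  intro k hk
  have hkI : k ∈ I := hk
  have hkN : k < N := Nat.lt_succ_of_le (Finset.le_sup (f := id) hkI)
  have hget : (Denumerable.ofNat (List (ℚ × ℚ)) i)[k]? = some (F k) := by
    rw [hofnat, hl, List.getElem?_ofFn]
    simp [List.ofFnNthVal, hkN]
  have hlt : ((F k).1 : ℝ) < ((F k).2 : ℝ) := by
    rw [hF]; simp only [dif_pos hkI]
    exact (hpair k hkI).choose_spec.1
  have hdik : d i k =
      (pickQ ((i:ℝ) * Real.sqrt 2) (F k).1 (F k).2 hlt : ℝ) + (i:ℝ) * Real.sqrt 2 := by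
    show dR i k = _
    rw [dR, hget]
    show dval _ (some ((F k).1, (F k).2)) = _
    rw [dval]
    rw [dif_pos hlt]
  have hspec := pickQ_spec ((i:ℝ) * Real.sqrt 2) (F k).1 (F k).2 hlt
  have hmem : d i k ∈ Set.Ico (((F k).1 : ℝ) : SorgenfreyLine) (((F k).2:ℝ) : SorgenfreyLine) := by
    rw [hdik]
    exact ⟨le_of_lt hspec.1, hspec.2⟩
  have hsubk : Set.Ico (((F k).1:ℝ) : SorgenfreyLine) (((F k).2:ℝ) : SorgenfreyLine) ⊆ u k := by
    rw [hF]; simp only [dif_pos hkI]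
    exact (hpair k hkI).choose_spec.2
  exact hsubk hmem

end SL

theorem sorgenfrey_power_not_CDH : ¬ CDH (ℕ → SorgenfreyLine) := by
  intro hCDH
  classical
  obtain ⟨h, hh⟩ := hCDH SL.D (SL.D ∪ SL.A) SL.D_countable SL.D_dense
      (SL.D_countable.union SL.A_countable) (SL.D_dense.mono Set.subset_union_left)
  set B : Set SL.X := h.symm '' SL.A with hBdef
  -- B ⊆ D
  have hBD : B ⊆ SL.D := by
    have hAE : SL.A ⊆ h '' SL.D := by rw [hh]; exact Set.subset_union_right
    rintro x ⟨p, hp, rfl⟩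
    obtain ⟨y, hy, hyp⟩ := hAE hp
    rw [← hyp]
    simpa using hy
  -- B is crowded
  have hBcrowd : ∀ x ∈ B, x ∈ closure (B \ {x}) := by
    rintro x ⟨p, hp, rfl⟩
    have h1 : p ∈ closure (SL.A \ {p}) := SL.A_crowded p hp
    have h2 : h.symm p ∈ h.symm '' closure (SL.A \ {p}) := ⟨p, h1, rfl⟩
    have h3 : h.symm '' closure (SL.A \ {p}) ⊆ closure (h.symm '' (SL.A \ {p})) :=
      image_closure_subset_closure_image h.symm.continuous
    have h4 : h.symm '' (SL.A \ {p}) = B \ {h.symm p} := by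
      rw [Set.image_diff h.symm.injective, Set.image_singleton, hBdef]
    rw [← h4]
    exact h3 h2
  -- the compact projection
  have hKcompact : IsCompact (h.symm '' SL.Q) := SL.Q_compact.image h.symm.continuous
  set C : Set SorgenfreyLine := (fun x : SL.X => x 0) '' (h.symm '' SL.Q) with hCdef
  have hCcompact : IsCompact C := hKcompact.image (continuous_apply 0)
  have hBK : B ⊆ h.symm '' SL.Q := Set.image_mono SL.A_sub_Q
  -- the step
  have hstep : ∀ x ∈ B, ∃ y, y ∈ B ∧ x 0 < y 0 := by
    intro x hx
    set U : Set SL.X := (fun z : SL.X => z 0) ⁻¹' (Set.Ico (x 0) (x 0 + 1)) with hU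
    have hUopen : IsOpen U := (SL.isOpen_Ico (x 0) (x 0 + 1)).preimage (continuous_apply 0)
    have hxU : x ∈ U := ⟨le_refl _, lt_add_one _⟩
    have hne := (mem_closure_iff.mp (hBcrowd x hx)) U hUopen hxU
    obtain ⟨y, hyU, hyB, hyne⟩ : ∃ y, y ∈ U ∧ y ∈ B ∧ y ∉ ({x} : Set SL.X) := by
      obtain ⟨y, hyU, hyB2⟩ := hne
      exact ⟨y, hyU, hyB2.1, hyB2.2⟩
    refine ⟨y, hyB, lt_of_le_of_ne hyU.1 ?_⟩
    intro heq
    apply hyne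
    obtain ⟨i1, hi1⟩ := hBD hx
    obtain ⟨i2, hi2⟩ := hBD hyB
    have : i1 = i2 := SL.d_collision (k := 0) (by rw [hi1, hi2, ← heq])
    simp only [Set.mem_singleton_iff]
    rw [← hi1, ← hi2, this]
  -- build the increasing chain
  obtain ⟨x₀, hx₀⟩ : B.Nonempty := SL.A_nonempty.image _
  choose! next hnextB hnextlt using hstep
  set seq : ℕ → SL.X := fun j => next^[j] x₀ with hseq
  have hseqB : ∀ j, seq j ∈ B := by
    intro j
    induction j with
    | zero => exact hx₀
    | succ n ih =>
      show next^[n+1] x₀ ∈ B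
      rw [Function.iterate_succ_apply']
      exact hnextB _ ih
  have hmono : StrictMono fun j => seq j 0 := by
    apply strictMono_nat_of_lt_succ
    intro j
    have : seq (j+1) = next (seq j) := Function.iterate_succ_apply' _ _ _
    rw [this]
    exact hnextlt _ (hseqB j)
  set q : ℕ → SorgenfreyLine := fun j => seq j 0 with hq
  have hqC : ∀ j, q j ∈ C := fun j => ⟨seq j, hBK (hseqB j), rfl⟩
  have hle : Filter.map q Filter.atTop ≤ Filter.principal C := by
    rw [Filter.le_principal_iff, Filter.mem_map]
    exact Filter.univ_mem' hqC
  obtain ⟨y, hyC, hcl⟩ := hCcompact.exists_clusterPt hle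
  have hfreq : ∀ s ∈ nhds y, ∃ᶠ j in Filter.atTop, q j ∈ s :=
    mapClusterPt_iff_frequently.mp hcl
  by_cases hcase : ∃ J, y < q J
  · obtain ⟨J, hJ⟩ := hcase
    have hfr := hfreq (Set.Ico y (q J)) ((SL.isOpen_Ico _ _).mem_nhds ⟨le_refl y, hJ⟩)
    obtain ⟨j, hjJ, hj⟩ := (Filter.frequently_atTop.mp hfr) J
    exact absurd hj.2 (not_lt.mpr (hmono.monotone hjJ))
  · push_neg at hcase
    have h1 := hfreq (Set.Ico y (y+1)) ((SL.isOpen_Ico _ _).mem_nhds ⟨le_refl y, lt_add_one y⟩)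
    obtain ⟨j1, _, hj1⟩ := (Filter.frequently_atTop.mp h1) 0
    obtain ⟨j2, hj12, hj2⟩ := (Filter.frequently_atTop.mp h1) (j1+1)
    have e1 : q j1 = y := le_antisymm (hcase j1) hj1.1
    have e2 : q j2 = y := le_antisymm (hcase j2) hj2.1
    have hlt : q j1 < q j2 := hmono (Nat.lt_of_succ_le hj12)
    rw [e1, e2] at hlt
    exact lt_irrefl _ hlt
end

section
/- There are exactly continuum-many homeomorphism classes of countable metrizable topological spaces. -/
open Set Topology

/-- Countable metrizable topological spaces (as a bundled sigma type). -/
def CtblMetrSpace : Type 1 :=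
  {X : (α : Type) × TopologicalSpace α //
    Countable X.1 ∧ @TopologicalSpace.MetrizableSpace X.1 X.2}

/-- Two such spaces are related iff they are homeomorphic. -/
def HomeoRel (X Y : CtblMetrSpace) : Prop :=
  Nonempty (@Homeomorph X.1.1 Y.1.1 X.1.2 Y.1.2)

open Filter


noncomputable section CMS

/-- iterated derived set of the whole space -/
def dIter (X : Type*) [TopologicalSpace X] : ℕ → Set X
  | 0 => Set.univ
  | (j+1) => derivedSet (dIter X j)

/-- the topological invariant: set of `n` such that some point of "infinite rank" is in the
closure of the rank-`n` points but not of the rank-`n+1` points. -/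
def TInv (X : Type*) [TopologicalSpace X] : Set ℕ :=
  {n | ∃ x : X, (∀ j, x ∈ dIter X j) ∧ x ∈ closure (dIter X n \ dIter X (n+1)) ∧
      x ∉ closure (dIter X (n+1) \ dIter X (n+2))}

theorem Homeomorph.image_derivedSet {X Y : Type*} [TopologicalSpace X] [TopologicalSpace Y]
    (h : X ≃ₜ Y) (s : Set X) : h '' derivedSet s = derivedSet (h '' s) := by
  refine subset_antisymm (h.continuous.image_derivedSet h.injective) ?_
  have step1 := h.symm.continuous.image_derivedSet h.symm.injective (A := h '' s)
  have hss : h.symm '' (h '' s) = s := by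
    rw [Set.image_image]; simp
  rw [hss] at step1
  intro y hy
  exact ⟨h.symm y, step1 ⟨y, hy, rfl⟩, by simp⟩

theorem Homeomorph.image_dIter {X Y : Type*} [TopologicalSpace X] [TopologicalSpace Y]
    (h : X ≃ₜ Y) (j : ℕ) : h '' dIter X j = dIter Y j := by
  induction j with
  | zero => simpa [dIter] using Set.image_univ_of_surjective h.surjective
  | succ j ih => rw [dIter, dIter, ← ih, h.image_derivedSet]

theorem TInv_eq_of_homeomorph {X Y : Type*} [TopologicalSpace X] [TopologicalSpace Y]
    (h : X ≃ₜ Y) : TInv X = TInv Y := by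
  ext n
  constructor <;> intro ⟨x, h1, h2, h3⟩
  · refine ⟨h x, fun j => ?_, ?_, ?_⟩
    · rw [← h.image_dIter j]; exact Set.mem_image_of_mem h (h1 j)
    · rw [← h.image_dIter n, ← h.image_dIter (n+1), ← Set.image_diff h.injective,
        ← h.image_closure]
      exact Set.mem_image_of_mem h h2
    · rw [← h.image_dIter (n+1), ← h.image_dIter (n+2), ← Set.image_diff h.injective,
        ← h.image_closure]
      intro hc
      exact h3 (h.injective.mem_set_image.mp hc)
  · refine ⟨h.symm x, fun j => ?_, ?_, ?_⟩
    · rw [← h.symm.image_dIter j]; exact Set.mem_image_of_mem _ (h1 j)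
    · rw [← h.symm.image_dIter n, ← h.symm.image_dIter (n+1),
        ← Set.image_diff h.symm.injective, ← h.symm.image_closure]
      exact Set.mem_image_of_mem _ h2
    · rw [← h.symm.image_dIter (n+1), ← h.symm.image_dIter (n+2),
        ← Set.image_diff h.symm.injective, ← h.symm.image_closure]
      intro hc
      exact h3 (h.symm.injective.mem_set_image.mp hc)

end CMS


noncomputable section CMS2

abbrev I3 : Type := ℕ × ℕ × ℕ
abbrev Amb : Type := I3 → ℕ

/-- cylinder sets are neighborhoods -/
theorem cyl_mem_nhds (x : Amb) (F : Finset I3) :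
    {y : Amb | ∀ i ∈ F, y i = x i} ∈ 𝓝 x := by
  have : {y : Amb | ∀ i ∈ F, y i = x i} = ⋂ i ∈ F, (fun y : Amb => y i) ⁻¹' {x i} := by
    ext y; simp
  rw [this]
  exact Filter.biInter_finset_mem F |>.2 fun i _ =>
    (continuous_apply i).continuousAt (isOpen_discrete {x i} |>.mem_nhds rfl)

theorem exists_cyl_subset {x : Amb} {U : Set Amb} (hU : U ∈ 𝓝 x) :
    ∃ F : Finset I3, {y : Amb | ∀ i ∈ F, y i = x i} ⊆ U := by
  rw [nhds_pi, Filter.mem_pi] at hU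
  obtain ⟨I, hIfin, t, htf, hsub⟩ := hU
  refine ⟨hIfin.toFinset, fun y hy => hsub fun i hi => ?_⟩
  have : y i = x i := hy i (hIfin.mem_toFinset.2 hi)
  rw [this]
  exact mem_of_mem_nhds (by simpa [nhds_discrete] using htf i)

theorem accPt_amb_iff (x : Amb) (s : Set Amb) :
    AccPt x (𝓟 s) ↔ ∀ F : Finset I3, ∃ y ∈ s, y ≠ x ∧ ∀ i ∈ F, y i = x i := by
  rw [accPt_iff_nhds]
  constructor
  · intro h F
    obtain ⟨y, ⟨hy1, hy2⟩, hy3⟩ := h _ (cyl_mem_nhds x F)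
    exact ⟨y, hy2, hy3, hy1⟩
  · intro h U hU
    obtain ⟨F, hF⟩ := exists_cyl_subset hU
    obtain ⟨y, hy1, hy2, hy3⟩ := h F
    exact ⟨y, ⟨hF hy3, hy1⟩, hy2⟩

theorem mem_closure_amb_iff (x : Amb) (s : Set Amb) :
    x ∈ closure s ↔ ∀ F : Finset I3, ∃ y ∈ s, ∀ i ∈ F, y i = x i := by
  rw [mem_closure_iff_nhds]
  constructor
  · intro h F
    obtain ⟨y, hy1, hy2⟩ := h _ (cyl_mem_nhds x F)
    exact ⟨y, hy2, hy1⟩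
  · intro h U hU
    obtain ⟨F, hF⟩ := exists_cyl_subset hU
    obtain ⟨y, hy1, hy2⟩ := h F
    exact ⟨y, hF hy2, hy1⟩

/-- transfer of `AccPt` between a subtype and the ambient space -/
theorem accPt_subtype {X : Type*} [TopologicalSpace X] {S : Set X} (x : S) (s : Set S) :
    AccPt x (𝓟 s) ↔ AccPt (x : X) (𝓟 ((↑) '' s : Set X)) := by
  rw [accPt_principal_iff_clusterPt, accPt_principal_iff_clusterPt,
    ← mem_closure_iff_clusterPt, ← mem_closure_iff_clusterPt, closure_subtype]
  congr! 2
  rw [Set.image_diff Subtype.val_injective]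
  simp

end CMS2


noncomputable section CMS3


def pt (s : Finset I3) : Amb := fun i => if i ∈ s then 1 else 0

theorem pt_agree {s t : Finset I3} {i : I3} : pt s i = pt t i ↔ (i ∈ s ↔ i ∈ t) := by
  unfold pt
  by_cases hs : i ∈ s <;> by_cases ht : i ∈ t <;> simp [hs, ht]

theorem pt_inj : Function.Injective pt := by
  intro s t h
  ext i
  exact pt_agree.mp (congrFun h i)


theorem triple_eq {a b c d e f : ℕ} (h : ((a,b,c) : I3) = (d,e,f)) :
    a = d ∧ b = e ∧ c = f := by
  simpa [Prod.ext_iff] using h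

def spineSupp (n : ℕ) : Finset I3 := {(n,0,0)}

def copySupp (n k : ℕ) (S : Finset ℕ) : Finset I3 :=
  insert (n,0,0) (insert (n,k,0) (S.image fun s => (n,k,s)))

def qSupp (n : ℕ) (T : Finset ℕ) : Finset I3 :=
  insert (n,0,0) (T.image fun t => (n,0,t))

theorem mem_spineSupp {n : ℕ} {i : I3} : i ∈ spineSupp n ↔ i = (n,0,0) := by
  simp [spineSupp]

theorem mem_copySupp {n k : ℕ} {S : Finset ℕ} {i : I3} :
    i ∈ copySupp n k S ↔ i = (n,0,0) ∨ i = (n,k,0) ∨ ∃ s ∈ S, i = (n,k,s) := by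
  simp [copySupp, eq_comm]

theorem mem_qSupp {n : ℕ} {T : Finset ℕ} {i : I3} :
    i ∈ qSupp n T ↔ i = (n,0,0) ∨ ∃ t ∈ T, i = (n,0,t) := by
  simp [qSupp, eq_comm]

section forms
variable {n n' k k' m : ℕ} {S S' T T' : Finset ℕ}

theorem spine_ne_empty : spineSupp n ≠ ∅ := by
  simp [spineSupp]

theorem copy_ne_empty : copySupp n k S ≠ ∅ := by
  intro h
  have : (n,0,0) ∈ copySupp n k S := mem_copySupp.mpr (Or.inl rfl)
  simp [h] at this

theorem q_ne_empty : qSupp n T ≠ ∅ := by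
  intro h
  have : (n,0,0) ∈ qSupp n T := mem_qSupp.mpr (Or.inl rfl)
  simp [h] at this

theorem copy_ne_spine (hk : 1 ≤ k) : copySupp n k S ≠ spineSupp m := by
  intro h
  have : (n,k,0) ∈ copySupp n k S := mem_copySupp.mpr (Or.inr (Or.inl rfl))
  rw [h, mem_spineSupp] at this
  obtain ⟨e1, e2, e3⟩ := triple_eq this
  omega

theorem q_ne_spine (hT : T.Nonempty) (hT1 : ∀ t ∈ T, 1 ≤ t) : qSupp n T ≠ spineSupp m := by
  intro h
  obtain ⟨t, ht⟩ := hT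
  have : (n,0,t) ∈ qSupp n T := mem_qSupp.mpr (Or.inr ⟨t, ht, rfl⟩)
  rw [h, mem_spineSupp] at this
  obtain ⟨e1, e2, e3⟩ := triple_eq this
  have := hT1 t ht
  omega

theorem copy_ne_q (hk : 1 ≤ k) (hT1 : ∀ t ∈ T, 1 ≤ t) : copySupp n k S ≠ qSupp m T := by
  intro h
  have : (n,k,0) ∈ copySupp n k S := mem_copySupp.mpr (Or.inr (Or.inl rfl))
  rw [h, mem_qSupp] at this
  rcases this with h1 | ⟨t, ht, h1⟩
  · obtain ⟨e1, e2, e3⟩ := triple_eq h1; omega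
  · obtain ⟨e1, e2, e3⟩ := triple_eq h1
    have := hT1 t ht
    omega

theorem spine_inj (h : spineSupp n = spineSupp n') : n = n' := by
  have : (n,0,0) ∈ spineSupp n' := by rw [← h, mem_spineSupp]
  rw [mem_spineSupp] at this
  exact (triple_eq this).1

theorem copy_inj (hk : 1 ≤ k) (hk' : 1 ≤ k') (hS : ∀ s ∈ S, 1 ≤ s) (hS' : ∀ s ∈ S', 1 ≤ s)
    (h : copySupp n k S = copySupp n' k' S') : n = n' ∧ k = k' ∧ S = S' := by
  have hn : n = n' := by
    have : (n,0,0) ∈ copySupp n' k' S' := by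
      rw [← h]; exact mem_copySupp.mpr (Or.inl rfl)
    rcases mem_copySupp.mp this with h1 | h1 | ⟨s, hs, h1⟩
    · exact (triple_eq h1).1
    · obtain ⟨e1, e2, e3⟩ := triple_eq h1; omega
    · obtain ⟨e1, e2, e3⟩ := triple_eq h1
      have := hS' s hs; omega
  subst hn
  have hkk : k = k' := by
    have : (n,k,0) ∈ copySupp n k' S' := by
      rw [← h]; exact mem_copySupp.mpr (Or.inr (Or.inl rfl))
    rcases mem_copySupp.mp this with h1 | h1 | ⟨s, hs, h1⟩
    · obtain ⟨e1, e2, e3⟩ := triple_eq h1; omega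
    · exact (triple_eq h1).2.1
    · obtain ⟨e1, e2, e3⟩ := triple_eq h1
      have := hS' s hs; omega
  subst hkk
  refine ⟨rfl, rfl, ?_⟩
  ext s
  constructor <;> intro hs
  · have : (n,k,s) ∈ copySupp n k S' := by
      rw [← h]; exact mem_copySupp.mpr (Or.inr (Or.inr ⟨s, hs, rfl⟩))
    rcases mem_copySupp.mp this with h1 | h1 | ⟨s', hs', h1⟩
    · obtain ⟨e1, e2, e3⟩ := triple_eq h1
      have := hS s hs; omega
    · obtain ⟨e1, e2, e3⟩ := triple_eq h1
      have := hS s hs; omega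
    · obtain ⟨e1, e2, e3⟩ := triple_eq h1
      rwa [e3]
  · have : (n,k,s) ∈ copySupp n k S := by
      rw [h]; exact mem_copySupp.mpr (Or.inr (Or.inr ⟨s, hs, rfl⟩))
    rcases mem_copySupp.mp this with h1 | h1 | ⟨s', hs', h1⟩
    · obtain ⟨e1, e2, e3⟩ := triple_eq h1
      have := hS' s hs; omega
    · obtain ⟨e1, e2, e3⟩ := triple_eq h1
      have := hS' s hs; omega
    · obtain ⟨e1, e2, e3⟩ := triple_eq h1
      rwa [e3]

theorem q_inj (hT1 : ∀ t ∈ T, 1 ≤ t) (hT1' : ∀ t ∈ T', 1 ≤ t)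
    (h : qSupp n T = qSupp n' T') : n = n' ∧ T = T' := by
  have hn : n = n' := by
    have : (n,0,0) ∈ qSupp n' T' := by rw [← h]; exact mem_qSupp.mpr (Or.inl rfl)
    rcases mem_qSupp.mp this with h1 | ⟨t, ht, h1⟩
    · exact (triple_eq h1).1
    · obtain ⟨e1, e2, e3⟩ := triple_eq h1
      have := hT1' t ht; omega
  subst hn
  refine ⟨rfl, ?_⟩
  ext t
  constructor <;> intro ht
  · have : (n,0,t) ∈ qSupp n T' := by
      rw [← h]; exact mem_qSupp.mpr (Or.inr ⟨t, ht, rfl⟩)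
    rcases mem_qSupp.mp this with h1 | ⟨t', ht', h1⟩
    · obtain ⟨e1, e2, e3⟩ := triple_eq h1
      have := hT1 t ht; omega
    · obtain ⟨e1, e2, e3⟩ := triple_eq h1
      rwa [e3]
  · have : (n,0,t) ∈ qSupp n T := by
      rw [h]; exact mem_qSupp.mpr (Or.inr ⟨t, ht, rfl⟩)
    rcases mem_qSupp.mp this with h1 | ⟨t', ht', h1⟩
    · obtain ⟨e1, e2, e3⟩ := triple_eq h1
      have := hT1' t ht; omega
    · obtain ⟨e1, e2, e3⟩ := triple_eq h1
      rwa [e3]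

end forms

/-- the `j`-th level set of the construction for `A ⊆ ℕ` -/
def DD (A : Set ℕ) (j : ℕ) : Set Amb :=
  {x | x = pt ∅ ∨
    (∃ n, (j ≤ n+1 ∨ n ∈ A) ∧ x = pt (spineSupp n)) ∨
    (∃ n k S, 1 ≤ k ∧ (∀ s ∈ S, 1 ≤ s) ∧ S.card + j ≤ n ∧ x = pt (copySupp n k S)) ∨
    (∃ n T, n ∈ A ∧ T.Nonempty ∧ (∀ t ∈ T, 1 ≤ t) ∧ x = pt (qSupp n T))}

variable {A : Set ℕ} {j m k : ℕ} {S T : Finset ℕ}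

theorem pt_empty_mem : pt ∅ ∈ DD A j := Or.inl rfl

theorem pt_spine_mem : pt (spineSupp m) ∈ DD A j ↔ (j ≤ m + 1 ∨ m ∈ A) := by
  constructor
  · rintro (h | ⟨n, hn, h⟩ | ⟨n, k, S, hk, hS, hc, h⟩ | ⟨n, T, hA, hT, hT1, h⟩)
    · exact absurd (pt_inj h) spine_ne_empty
    · rw [spine_inj (pt_inj h)]; exact hn
    · exact absurd (pt_inj h).symm (copy_ne_spine hk)
    · exact absurd (pt_inj h).symm (q_ne_spine hT hT1)
  · intro h
    exact Or.inr (Or.inl ⟨m, h, rfl⟩)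

theorem pt_copy_mem (hk : 1 ≤ k) (hS : ∀ s ∈ S, 1 ≤ s) :
    pt (copySupp m k S) ∈ DD A j ↔ S.card + j ≤ m := by
  constructor
  · rintro (h | ⟨n, hn, h⟩ | ⟨n, k', S', hk', hS', hc, h⟩ | ⟨n, T, hA, hT, hT1, h⟩)
    · exact absurd (pt_inj h) copy_ne_empty
    · exact absurd (pt_inj h) (copy_ne_spine hk)
    · obtain ⟨h1, h2, h3⟩ := copy_inj hk hk' hS hS' (pt_inj h)
      subst h1; subst h3; exact hc
    · exact absurd (pt_inj h) (copy_ne_q hk hT1)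
  · intro h
    exact Or.inr (Or.inr (Or.inl ⟨m, k, S, hk, hS, h, rfl⟩))

theorem pt_q_mem (hT : T.Nonempty) (hT1 : ∀ t ∈ T, 1 ≤ t) :
    pt (qSupp m T) ∈ DD A j ↔ m ∈ A := by
  constructor
  · rintro (h | ⟨n, hn, h⟩ | ⟨n, k', S', hk', hS', hc, h⟩ | ⟨n, T', hA, hT', hT1', h⟩)
    · exact absurd (pt_inj h) q_ne_empty
    · exact absurd (pt_inj h) (q_ne_spine hT hT1)
    · exact absurd (pt_inj h).symm (copy_ne_q hk' hT1)
    · obtain ⟨h1, h2⟩ := q_inj hT1 hT1' (pt_inj h)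
      subst h1; exact hA
  · intro h
    exact Or.inr (Or.inr (Or.inr ⟨m, T, h, hT, hT1, rfl⟩))

theorem DD_mono {j j' : ℕ} (h : j ≤ j') : DD A j' ⊆ DD A j := by
  rintro x (hx | ⟨n, hn, hx⟩ | ⟨n, k, S, hk, hS, hc, hx⟩ | hx)
  · exact Or.inl hx
  · refine Or.inr (Or.inl ⟨n, ?_, hx⟩)
    rcases hn with h' | h'
    · left; omega
    · right; exact h'
  · exact Or.inr (Or.inr (Or.inl ⟨n, k, S, hk, hS, by omega, hx⟩))
  · exact Or.inr (Or.inr (Or.inr hx))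

end CMS3
noncomputable section CMS4

variable {A : Set ℕ}

/-- a bound exceeding all coordinates appearing in the window `F` -/
def bnd (F : Finset I3) : ℕ := (F.sup fun p => p.1 ⊔ p.2.1 ⊔ p.2.2) + 1

theorem bnd_pos (F : Finset I3) : 1 ≤ bnd F := Nat.succ_le_succ (Nat.zero_le _)

theorem mem_bnd {F : Finset I3} {i : I3} (h : i ∈ F) :
    i.1 < bnd F ∧ i.2.1 < bnd F ∧ i.2.2 < bnd F := by
  have h1 := Finset.le_sup (f := fun p : I3 => p.1 ⊔ p.2.1 ⊔ p.2.2) h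
  obtain ⟨h2, h3⟩ := max_le_iff.mp h1
  obtain ⟨h4, h5⟩ := max_le_iff.mp h2
  unfold bnd
  omega

theorem derStep (x : Amb) (hx : x ∈ DD A 0) (j : ℕ) :
    AccPt x (𝓟 (DD A j)) ↔ x ∈ DD A (j+1) := by
  rcases hx with hx | ⟨m, _, hx⟩ | ⟨m, k, S, hk, hS, hc, hx⟩ | ⟨m, T, hA, hT, hT1, hx⟩ <;> subst hx
  · -- x = pt ∅ : both sides hold
    rw [iff_true_intro pt_empty_mem, iff_true]
    rw [accPt_amb_iff]
    intro F
    refine ⟨pt (spineSupp (bnd F + j)), pt_spine_mem.mpr (Or.inl (by omega)),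
      fun h => spine_ne_empty (pt_inj h), fun i hi => pt_agree.mpr ?_⟩
    simp only [mem_spineSupp, Finset.notMem_empty, iff_false]
    intro hieq
    have := (mem_bnd hi).1
    rw [hieq] at this
    simp at this
  · -- x = pt (spineSupp m)
    have hrhs : pt (spineSupp m) ∈ DD A (j+1) ↔ (j ≤ m ∨ m ∈ A) := by
      rw [pt_spine_mem]
      have heq : (j + 1 ≤ m + 1) ↔ (j ≤ m) := by omega
      rw [heq]
    rw [hrhs]
    constructor
    · -- ¬(j ≤ m ∨ m ∈ A) → ¬AccPt
      intro hacc
      by_contra hcon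
      push_neg at hcon
      obtain ⟨hjm, hmA⟩ := hcon
      rw [accPt_amb_iff] at hacc
      obtain ⟨y, hy1, hy2, hy3⟩ := hacc {(m,0,0)}
      have hmem : (m,0,0) ∈ spineSupp m := mem_spineSupp.mpr rfl
      rcases hy1 with h | ⟨n, hn, h⟩ | ⟨n, k, S, hk, hS, hcc, h⟩ | ⟨n, T, hA', hT, hT1, h⟩ <;> subst h
      · have := (pt_agree.mp (hy3 _ (Finset.mem_singleton_self _))).mpr hmem
        simp at this
      · have := (pt_agree.mp (hy3 _ (Finset.mem_singleton_self _))).mpr hmem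
        rw [mem_spineSupp] at this
        obtain ⟨e1, _, _⟩ := triple_eq this
        subst e1
        exact hy2 rfl
      · have := (pt_agree.mp (hy3 _ (Finset.mem_singleton_self _))).mpr hmem
        rcases mem_copySupp.mp this with h1 | h1 | ⟨s, hs, h1⟩
        · obtain ⟨e1, _, _⟩ := triple_eq h1
          omega
        · obtain ⟨e1, e2, e3⟩ := triple_eq h1
          omega
        · obtain ⟨e1, e2, e3⟩ := triple_eq h1
          have := hS s hs
          omega
      · have := (pt_agree.mp (hy3 _ (Finset.mem_singleton_self _))).mpr hmem
        rcases mem_qSupp.mp this with h1 | ⟨t, ht, h1⟩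
        · obtain ⟨e1, _, _⟩ := triple_eq h1
          subst e1
          exact hmA hA'
        · obtain ⟨e1, e2, e3⟩ := triple_eq h1
          have := hT1 t ht
          omega
    · rintro (hjm | hmA)
      · -- approximate with copies
        rw [accPt_amb_iff]
        intro F
        refine ⟨pt (copySupp m (bnd F) ∅),
          (pt_copy_mem (bnd_pos F) (by simp)).mpr (by simpa using hjm),
          fun h => copy_ne_spine (bnd_pos F) (pt_inj h), fun i hi => pt_agree.mpr ?_⟩
        rw [mem_copySupp, mem_spineSupp]
        constructor
        · rintro (h | h | ⟨s, hs, h⟩)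
          · exact h
          · exfalso
            have := (mem_bnd hi).2.1
            rw [h] at this
            simp at this
          · simp at hs
        · intro h
          exact Or.inl h
      · -- approximate with tassel points
        rw [accPt_amb_iff]
        intro F
        refine ⟨pt (qSupp m {bnd F}),
          (pt_q_mem ⟨bnd F, Finset.mem_singleton_self _⟩ (by simp [bnd_pos])).mpr hmA,
          fun h => q_ne_spine ⟨bnd F, Finset.mem_singleton_self _⟩ (by simp [bnd_pos]) (pt_inj h),
          fun i hi => pt_agree.mpr ?_⟩
        rw [mem_qSupp, mem_spineSupp]
        constructor
        · rintro (h | ⟨t, ht, h⟩)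
          · exact h
          · exfalso
            rw [Finset.mem_singleton] at ht
            subst ht
            have := (mem_bnd hi).2.2
            rw [h] at this
            simp at this
        · intro h
          exact Or.inl h
  · -- x = pt (copySupp m k S)
    rw [pt_copy_mem hk hS]
    constructor
    · -- card S + j ≥ m → ¬AccPt ; contrapositive
      intro hacc
      by_contra hcon
      push_neg at hcon
      have hge : m ≤ S.card + j := by omega
      rw [accPt_amb_iff] at hacc
      obtain ⟨y, hy1, hy2, hy3⟩ := hacc (copySupp m k S)
      rcases hy1 with h | ⟨n, hn, h⟩ | ⟨n, k', S', hk', hS', hcc, h⟩ | ⟨n, T, hA', hT, hT1, h⟩ <;> subst h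
      · have := (pt_agree.mp (hy3 _ (mem_copySupp.mpr (Or.inl rfl)))).mpr
          (mem_copySupp.mpr (Or.inl rfl))
        simp at this
      · have := (pt_agree.mp (hy3 _ (mem_copySupp.mpr (Or.inr (Or.inl rfl))))).mpr
          (mem_copySupp.mpr (Or.inr (Or.inl rfl)))
        rw [mem_spineSupp] at this
        obtain ⟨_, e2, _⟩ := triple_eq this
        omega
      · -- y is a copy point as well
        have h00 := (pt_agree.mp (hy3 _ (mem_copySupp.mpr (Or.inl rfl)))).mpr
          (mem_copySupp.mpr (Or.inl rfl))
        have hnm : n = m := by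
          rcases mem_copySupp.mp h00 with h1 | h1 | ⟨s, hs, h1⟩
          · exact ((triple_eq h1).1).symm
          · obtain ⟨e1, e2, e3⟩ := triple_eq h1; omega
          · obtain ⟨e1, e2, e3⟩ := triple_eq h1
            have := hS' s hs; omega
        subst hnm
        have hk0 := (pt_agree.mp (hy3 _ (mem_copySupp.mpr (Or.inr (Or.inl rfl))))).mpr
          (mem_copySupp.mpr (Or.inr (Or.inl rfl)))
        have hkk : k' = k := by
          rcases mem_copySupp.mp hk0 with h1 | h1 | ⟨s, hs, h1⟩
          · obtain ⟨e1, e2, e3⟩ := triple_eq h1; omega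
          · exact ((triple_eq h1).2.1).symm
          · obtain ⟨e1, e2, e3⟩ := triple_eq h1
            have := hS' s hs; omega
        subst hkk
        have hSS : S ⊆ S' := by
          intro s hs
          have hmem := (pt_agree.mp (hy3 _ (mem_copySupp.mpr (Or.inr (Or.inr ⟨s, hs, rfl⟩))))).mpr
            (mem_copySupp.mpr (Or.inr (Or.inr ⟨s, hs, rfl⟩)))
          rcases mem_copySupp.mp hmem with h1 | h1 | ⟨s', hs', h1⟩
          · obtain ⟨e1, e2, e3⟩ := triple_eq h1; omega
          · obtain ⟨e1, e2, e3⟩ := triple_eq h1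
            have := hS s hs; omega
          · obtain ⟨e1, e2, e3⟩ := triple_eq h1
            subst e3; exact hs'
        have hcard : S'.card ≤ S.card := by omega
        have : S = S' := Finset.eq_of_subset_of_card_le hSS hcard
        subst this
        exact hy2 rfl
      · have := (pt_agree.mp (hy3 _ (mem_copySupp.mpr (Or.inr (Or.inl rfl))))).mpr
          (mem_copySupp.mpr (Or.inr (Or.inl rfl)))
        rcases mem_qSupp.mp this with h1 | ⟨t, ht, h1⟩
        · obtain ⟨e1, e2, e3⟩ := triple_eq h1; omega
        · obtain ⟨e1, e2, e3⟩ := triple_eq h1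
          have := hT1 t ht; omega
    · -- card S + (j+1) ≤ m → AccPt
      intro hlt
      rw [accPt_amb_iff]
      intro F
      set N := bnd F + (S.sup id) + 1 with hN
      have hNS : N ∉ S := by
        intro h
        have := Finset.le_sup (f := id) h
        simp only [id] at this
        omega
      have hN1 : 1 ≤ N := by omega
      have hNb : bnd F ≤ N := by omega
      refine ⟨pt (copySupp m k (insert N S)), ?_, ?_, fun i hi => pt_agree.mpr ?_⟩
      · refine (pt_copy_mem hk ?_).mpr ?_
        · intro s hs
          rcases Finset.mem_insert.mp hs with h | h
          · omega
          · exact hS s h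
        · rw [Finset.card_insert_of_notMem hNS]
          omega
      · intro h
        have := (copy_inj hk hk (fun s hs => by
            rcases Finset.mem_insert.mp hs with h' | h'
            · omega
            · exact hS s h') hS (pt_inj h)).2.2
        rw [← this] at hNS
        exact hNS (Finset.mem_insert_self _ _)
      · rw [mem_copySupp, mem_copySupp]
        constructor
        · rintro (h | h | ⟨s, hs, h⟩)
          · exact Or.inl h
          · exact Or.inr (Or.inl h)
          · rcases Finset.mem_insert.mp hs with h' | h'
            · exfalso
              subst h'
              have := (mem_bnd hi).2.2
              rw [h] at this
              simp only at this
              omega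
            · exact Or.inr (Or.inr ⟨s, h', h⟩)
        · rintro (h | h | ⟨s, hs, h⟩)
          · exact Or.inl h
          · exact Or.inr (Or.inl h)
          · exact Or.inr (Or.inr ⟨s, Finset.mem_insert_of_mem hs, h⟩)
  · -- x = pt (qSupp m T) : both sides hold
    rw [iff_true_intro ((pt_q_mem hT hT1).mpr hA), iff_true]
    rw [accPt_amb_iff]
    intro F
    set N := bnd F + (T.sup id) + 1 with hN
    have hNT : N ∉ T := by
      intro h
      have := Finset.le_sup (f := id) h
      simp only [id] at this
      omega
    have hT1' : ∀ t ∈ insert N T, 1 ≤ t := by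
      intro t ht
      rcases Finset.mem_insert.mp ht with h | h
      · omega
      · exact hT1 t h
    refine ⟨pt (qSupp m (insert N T)),
      (pt_q_mem ⟨N, Finset.mem_insert_self _ _⟩ hT1').mpr hA, ?_, fun i hi => pt_agree.mpr ?_⟩
    · intro h
      have := (q_inj hT1' hT1 (pt_inj h)).2
      rw [← this] at hNT
      exact hNT (Finset.mem_insert_self _ _)
    · rw [mem_qSupp, mem_qSupp]
      constructor
      · rintro (h | ⟨t, ht, h⟩)
        · exact Or.inl h
        · rcases Finset.mem_insert.mp ht with h' | h'
          · exfalso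
            subst h'
            have := (mem_bnd hi).2.2
            rw [h] at this
            simp only at this
            omega
          · exact Or.inr ⟨t, h', h⟩
      · rintro (h | ⟨t, ht, h⟩)
        · exact Or.inl h
        · exact Or.inr ⟨t, Finset.mem_insert_of_mem ht, h⟩

end CMS4
noncomputable section CMS5

variable {A : Set ℕ}

theorem dIter_DD (A : Set ℕ) (j : ℕ) :
    dIter (↥(DD A 0)) j = (Subtype.val) ⁻¹' (DD A j) := by
  induction j with
  | zero =>
    simp only [dIter]
    ext x
    simp [x.2]
  | succ j ih =>
    ext x
    show AccPt x (𝓟 (dIter (↥(DD A 0)) j)) ↔ _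
    rw [ih, accPt_subtype]
    have himg : (Subtype.val '' (Subtype.val ⁻¹' (DD A j) : Set (↥(DD A 0))) : Set Amb)
        = DD A j := by
      rw [Set.image_preimage_eq_inter_range, Subtype.range_val]
      exact Set.inter_eq_left.mpr (DD_mono (Nat.zero_le j))
    rw [himg]
    exact derStep x.1 x.2 j

/-- ambient rank-exactly-`n` set -/
def RR (A : Set ℕ) (n : ℕ) : Set Amb := DD A n \ DD A (n+1)

theorem RR_subset : RR A n ⊆ DD A 0 := fun x hx => DD_mono (Nat.zero_le n) hx.1

-- (F1) for m ∈ A, the spine point is in the closure of the rank-m points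
theorem F1 (hA : m ∈ A) : pt (spineSupp m) ∈ closure (RR A m) := by
  rw [mem_closure_amb_iff]
  intro F
  refine ⟨pt (copySupp m (bnd F) ∅), ⟨(pt_copy_mem (bnd_pos F) (by simp)).mpr (by simp),
    fun hmem => by
      have := (pt_copy_mem (A := A) (j := m + 1) (bnd_pos F) (by simp)).mp hmem
      simp at this⟩, fun i hi => pt_agree.mpr ?_⟩
  rw [mem_copySupp, mem_spineSupp]
  constructor
  · rintro (h | h | ⟨s, hs, h⟩)
    · exact h
    · exfalso
      have := (mem_bnd hi).2.1
      rw [h] at this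
      simp at this
    · simp at hs
  · intro h
    exact Or.inl h

-- (F2) for m ∈ A and n > m, the spine point is not in the closure of the rank-n points
theorem F2 (hA : m ∈ A) (hnm : m < n) : pt (spineSupp m) ∉ closure (RR A n) := by
  intro hclos
  obtain ⟨y, hy, hagree⟩ := (mem_closure_amb_iff _ _).mp hclos {(m,0,0)}
  rcases hy.1 with h | ⟨n', hn', h⟩ | ⟨n', k', S', hk', hS', hc', h⟩ |
      ⟨n', T', hA', hT', hT1', h⟩ <;> subst h <;>
    have hmem := (pt_agree.mp (hagree _ (Finset.mem_singleton_self _))).mpr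
      (mem_spineSupp.mpr rfl)
  · simp at hmem
  · rw [mem_spineSupp] at hmem
    obtain ⟨e1, _, _⟩ := triple_eq hmem
    subst e1
    exact hy.2 (pt_spine_mem.mpr (Or.inr hA))
  · have hcard := (pt_copy_mem hk' hS').mp hy.1
    rcases mem_copySupp.mp hmem with h1 | h1 | ⟨s, hs, h1⟩
    · obtain ⟨e1, _, _⟩ := triple_eq h1
      omega
    · obtain ⟨e1, e2, e3⟩ := triple_eq h1
      omega
    · obtain ⟨e1, e2, e3⟩ := triple_eq h1
      have := hS' s hs
      omega
  · rcases mem_qSupp.mp hmem with h1 | ⟨t, ht, h1⟩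
    · obtain ⟨e1, _, _⟩ := triple_eq h1
      subst e1
      exact hy.2 ((pt_q_mem hT' hT1').mpr hA')
    · obtain ⟨e1, e2, e3⟩ := triple_eq h1
      have := hT1' t ht
      omega

-- (F3) for n < m the spine point at m is in the closure of the rank-(n+1) points
theorem F3 (hnm : n + 1 ≤ m) : pt (spineSupp m) ∈ closure (RR A (n+1)) := by
  rw [mem_closure_amb_iff]
  intro F
  set B := bnd F with hB
  set S : Finset ℕ := Finset.Icc (B+1) (B + (m - n - 1)) with hSdef
  have hScard : S.card = m - n - 1 := by
    rw [hSdef, Nat.card_Icc]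
    omega
  have hS1 : ∀ s ∈ S, 1 ≤ s := by
    intro s hs
    rw [hSdef, Finset.mem_Icc] at hs
    omega
  have hSbig : ∀ s ∈ S, B < s := by
    intro s hs
    rw [hSdef, Finset.mem_Icc] at hs
    omega
  refine ⟨pt (copySupp m B S), ⟨(pt_copy_mem (bnd_pos F) hS1).mpr (by omega),
    fun hmem => by
      have := (pt_copy_mem (A := A) (j := n + 2) (bnd_pos F) hS1).mp hmem
      omega⟩, fun i hi => pt_agree.mpr ?_⟩
  rw [mem_copySupp, mem_spineSupp]
  constructor
  · rintro (h | h | ⟨s, hs, h⟩)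
    · exact h
    · exfalso
      have := (mem_bnd hi).2.1
      rw [h] at this
      simp only at this
      omega
    · exfalso
      have := (mem_bnd hi).2.1
      rw [h] at this
      simp only at this
      omega
  · intro h
    exact Or.inl h

-- (F4) the zero point is in the closure of the rank-(n+1) points, for every n
theorem F4 (n : ℕ) : pt (∅ : Finset I3) ∈ closure (RR A (n+1)) := by
  rw [mem_closure_amb_iff]
  intro F
  set B := bnd F with hB
  set M := B + n + 1 with hM
  set S : Finset ℕ := Finset.Icc (B+1) (B + B) with hSdef
  have hScard : S.card = B := by
    rw [hSdef, Nat.card_Icc]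
    omega
  have hS1 : ∀ s ∈ S, 1 ≤ s := by
    intro s hs
    rw [hSdef, Finset.mem_Icc] at hs
    omega
  refine ⟨pt (copySupp M 1 S), ⟨(pt_copy_mem le_rfl hS1).mpr (by omega),
    fun hmem => by
      have := (pt_copy_mem (A := A) (j := n + 2) le_rfl hS1).mp hmem
      omega⟩, fun i hi => pt_agree.mpr ?_⟩
  simp only [Finset.notMem_empty, iff_false]
  intro hmem
  have hbig := (mem_bnd hi).1
  rcases mem_copySupp.mp hmem with h | h | ⟨s, hs, h⟩ <;> rw [h] at hbig <;>
    simp only at hbig <;> omega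

-- (F5) tassel points are in the closure of no rank-n set
theorem F5 (hT : T.Nonempty) (hT1 : ∀ t ∈ T, 1 ≤ t) (n : ℕ) :
    pt (qSupp m T) ∉ closure (RR A n) := by
  obtain ⟨t₀, ht₀⟩ := hT
  have ht₀1 := hT1 t₀ ht₀
  intro hclos
  obtain ⟨y, hy, hagree⟩ := (mem_closure_amb_iff _ _).mp hclos {(m,0,t₀)}
  rcases hy.1 with h | ⟨n', hn', h⟩ | ⟨n', k', S', hk', hS', hc', h⟩ |
      ⟨n', T', hA', hT', hT1', h⟩ <;> subst h <;>
    have hmem := (pt_agree.mp (hagree _ (Finset.mem_singleton_self _))).mpr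
      (mem_qSupp.mpr (Or.inr ⟨t₀, ht₀, rfl⟩))
  · simp at hmem
  · rw [mem_spineSupp] at hmem
    obtain ⟨_, _, e3⟩ := triple_eq hmem
    omega
  · rcases mem_copySupp.mp hmem with h1 | h1 | ⟨s, hs, h1⟩
    · obtain ⟨_, _, e3⟩ := triple_eq h1
      omega
    · obtain ⟨_, _, e3⟩ := triple_eq h1
      omega
    · obtain ⟨_, e2, _⟩ := triple_eq h1
      omega
  · rcases mem_qSupp.mp hmem with h1 | ⟨t, ht, h1⟩
    · obtain ⟨_, _, e3⟩ := triple_eq h1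
      omega
    · obtain ⟨e1, _, _⟩ := triple_eq h1
      subst e1
      exact hy.2 ((pt_q_mem hT' hT1').mpr hA')

-- transfer of the closure statements to the subtype
theorem closure_transfer (x : ↥(DD A 0)) (n : ℕ) :
    x ∈ closure (dIter (↥(DD A 0)) n \ dIter (↥(DD A 0)) (n+1)) ↔
      (x : Amb) ∈ closure (RR A n) := by
  rw [dIter_DD, dIter_DD, ← Set.preimage_diff, closure_subtype]
  have himg : (Subtype.val '' (Subtype.val ⁻¹' (DD A n \ DD A (n+1)) : Set (↥(DD A 0))) : Set Amb)
      = DD A n \ DD A (n+1) := by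
    rw [Set.image_preimage_eq_inter_range, Subtype.range_val]
    exact Set.inter_eq_left.mpr (RR_subset (A := A) (n := n))
  rw [himg]
  exact Iff.rfl

theorem TInv_DD (A : Set ℕ) : TInv (↥(DD A 0)) = A := by
  ext n
  constructor
  · rintro ⟨x, h1, h2, h3⟩
    rw [closure_transfer] at h2 h3
    have hx0 : (x : Amb) ∈ DD A 0 := x.2
    have hxall : ∀ j, (x : Amb) ∈ DD A j := by
      intro j
      have := h1 j
      rw [dIter_DD] at this
      exact this
    rcases hx0 with hx | ⟨m, _, hx⟩ | ⟨m, k, S, hk, hS, hc, hx⟩ | ⟨m, T, hA, hT, hT1, hx⟩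
    · exfalso
      rw [hx] at h3
      exact h3 (F4 n)
    · -- spine point: m ∈ A and n = m
      have hmA : m ∈ A := by
        have := hxall (m + 2)
        rw [hx, pt_spine_mem] at this
        rcases this with h | h
        · omega
        · exact h
      rw [hx] at h2 h3
      have hnm1 : ¬ m < n := fun h => F2 hmA h h2
      have hnm2 : ¬ n < m := fun h => h3 (F3 (by omega))
      have : n = m := by omega
      rw [this]
      exact hmA
    · exfalso
      have := hxall (m + 1)
      rw [hx, pt_copy_mem hk hS] at this
      omega
    · exfalso
      rw [hx] at h2
      exact F5 hT hT1 n h2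
  · intro hA
    refine ⟨⟨pt (spineSupp n), pt_spine_mem.mpr (Or.inl (by omega))⟩, fun j => ?_, ?_, ?_⟩
    · rw [dIter_DD]
      exact pt_spine_mem.mpr (Or.inr hA)
    · rw [closure_transfer]
      exact F1 hA
    · rw [closure_transfer]
      exact F2 hA (by omega)

end CMS5
noncomputable section CMS6

open Cardinal

theorem homeoRel_equivalence : Equivalence HomeoRel where
  refl X := ⟨@Homeomorph.refl _ X.1.2⟩
  symm {X Y} h := h.elim fun e => ⟨@Homeomorph.symm _ _ X.1.2 Y.1.2 e⟩
  trans {X Y Z} h1 h2 := h1.elim fun e1 => h2.elim fun e2 =>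
    ⟨@Homeomorph.trans _ _ _ X.1.2 Y.1.2 Z.1.2 e1 e2⟩

theorem DD_countable (A : Set ℕ) : (DD A 0).Countable := by
  have hsub : DD A 0 ⊆ Set.range pt := by
    rintro x (hx | ⟨n, _, hx⟩ | ⟨n, k, S, _, _, _, hx⟩ | ⟨n, T, _, _, _, hx⟩) <;>
      exact ⟨_, hx.symm⟩
  exact (Set.countable_range pt).mono hsub

instance amb_metrizable : TopologicalSpace.MetrizableSpace Amb := by
  infer_instance

/-- the space attached to a set `A` of naturals -/
def mkSpace (A : Set ℕ) : CtblMetrSpace :=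
  ⟨⟨↥(DD A 0), inferInstance⟩, (DD_countable A).to_subtype, inferInstance⟩

theorem mkSpace_inj : Function.Injective (fun A : Set ℕ => Quot.mk HomeoRel (mkSpace A)) := by
  intro A B h
  have hrel : HomeoRel (mkSpace A) (mkSpace B) :=
    homeoRel_equivalence.eqvGen_iff.mp (Quot.eqvGen_exact h)
  obtain ⟨e⟩ := hrel
  have e' : ↥(DD A 0) ≃ₜ ↥(DD B 0) := e
  have := TInv_eq_of_homeomorph e'
  rw [TInv_DD, TInv_DD] at this
  exact this

theorem lower_bound : Cardinal.continuum.{1} ≤ Cardinal.mk (Quot HomeoRel) := by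
  have hinj : Function.Injective
      (fun A : ULift.{1} (Set ℕ) => Quot.mk HomeoRel (mkSpace A.down)) := by
    intro A B h
    exact ULift.ext _ _ (mkSpace_inj h)
  have := Cardinal.mk_le_of_injective hinj
  rwa [Cardinal.mk_uLift, Cardinal.mk_set, Cardinal.mk_nat, Cardinal.two_power_aleph0,
    Cardinal.lift_continuum] at this

end CMS6
noncomputable section CMS7

open Cardinal TopologicalSpace

abbrev EE : Type := lp (fun _ : ℕ => ℝ) ⊤

def optSet (f : ℕ → Option EE) : Set EE := {x | ∃ n, f n = some x}

theorem optSet_countable (f : ℕ → Option EE) : (optSet f).Countable := by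
  have : optSet f ⊆ Set.range (fun n => (f n).getD 0) := by
    rintro x ⟨n, hn⟩
    exact ⟨n, by show (f n).getD 0 = x; rw [hn]; rfl⟩
  exact (Set.countable_range _).mono this

set_option synthInstance.maxHeartbeats 1000000 in
def optSpace (f : ℕ → Option EE) : CtblMetrSpace :=
  ⟨⟨↥(optSet f), inferInstance⟩, (optSet_countable f).to_subtype, inferInstance⟩

theorem upper_surj :
    Function.Surjective
      (fun f : ULift.{1} (ℕ → Option EE) => Quot.mk HomeoRel (optSpace f.down)) := by
  intro q
  obtain ⟨X, rfl⟩ := Quot.exists_rep q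
  obtain ⟨⟨α, t⟩, hC, hM⟩ := X
  letI := t
  haveI := hC
  haveI := hM
  rcases isEmpty_or_nonempty α with he | hne
  · refine ⟨⟨fun _ => none⟩, Quot.sound ?_⟩
    have hempty : IsEmpty ↥(optSet (fun _ : ℕ => (none : Option EE))) := by
      refine ⟨fun x => ?_⟩
      obtain ⟨n, hn⟩ := x.2
      simp at hn
    have h : @Homeomorph ↥(optSet (fun _ : ℕ => (none : Option EE))) α inferInstance t :=
      { toEquiv := Equiv.equivOfIsEmpty _ _
        continuous_toFun := continuous_def.mpr fun s _ => by
          rw [Set.eq_empty_of_isEmpty (_ ⁻¹' s)]; exact isOpen_empty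
        continuous_invFun := continuous_def.mpr fun s _ => by
          rw [Set.eq_empty_of_isEmpty (_ ⁻¹' s)]; exact isOpen_empty }
    exact Nonempty.intro h
  · letI : MetricSpace α := TopologicalSpace.metrizableSpaceMetric α
    obtain ⟨u, hu⟩ := exists_surjective_nat α
    set emb := kuratowskiEmbedding α with hemb
    have hiso := kuratowskiEmbedding.isometry α
    refine ⟨⟨fun n => some (emb (u n))⟩, Quot.sound ?_⟩
    have hset : optSet (fun n => some (emb (u n))) = Set.range emb := by
      ext x
      constructor
      · rintro ⟨n, hn⟩
        exact ⟨u n, Option.some.inj hn⟩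
      · rintro ⟨a, ha⟩
        obtain ⟨n, hn⟩ := hu a
        exact ⟨n, by show some (emb (u n)) = some x; rw [hn, ha]⟩
    have h1 : α ≃ₜ ↥(Set.range emb) := hiso.isEmbedding.toHomeomorph
    exact Nonempty.intro ((h1.trans (Homeomorph.setCongr hset.symm)).symm)

theorem upper_bound : Cardinal.mk (Quot HomeoRel) ≤ Cardinal.continuum.{1} := by
  have h1 := Cardinal.mk_le_of_surjective upper_surj
  rw [Cardinal.mk_uLift] at h1
  have hE : #EE ≤ Cardinal.continuum := by
    have h2 : #EE ≤ #(∀ _ : ℕ, ℝ) := Cardinal.mk_le_of_injective Subtype.val_injective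
    have h3 : #(∀ _ : ℕ, ℝ) = Cardinal.continuum := by
      rw [Cardinal.mk_pi]
      simp [Cardinal.mk_real, Cardinal.prod_const, Cardinal.continuum_power_aleph0]
    rwa [h3] at h2
  have hOpt : #(Option EE) ≤ Cardinal.continuum := by
    rw [Cardinal.mk_option]
    calc #EE + 1 ≤ Cardinal.continuum + 1 := by gcongr
      _ = Cardinal.continuum := Cardinal.add_one_eq Cardinal.aleph0_le_continuum
  have harr : #(ℕ → Option EE) ≤ Cardinal.continuum := by
    rw [Cardinal.mk_arrow, Cardinal.mk_nat, Cardinal.lift_aleph0, Cardinal.lift_id]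
    calc #(Option EE) ^ Cardinal.aleph0 ≤ Cardinal.continuum ^ Cardinal.aleph0 := by
          exact Cardinal.power_le_power_right hOpt
      _ = Cardinal.continuum := Cardinal.continuum_power_aleph0
  calc Cardinal.mk (Quot HomeoRel) ≤ Cardinal.lift.{1} #(ℕ → Option EE) := h1
    _ ≤ Cardinal.lift.{1} Cardinal.continuum := by exact_mod_cast Cardinal.lift_le.mpr harr
    _ = Cardinal.continuum.{1} := Cardinal.lift_continuum

theorem card_homeo_classes_ctbl_metrizable :
    Cardinal.mk (Quot HomeoRel) = Cardinal.continuum.{1} := by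
  exact le_antisymm upper_bound lower_bound

end CMS7
end
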